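/- arXiv:2004.01089 — 3 statements merged into one kernel-verified Lean document; each statement's English description precedes it below -/
import Mathlib

section
/- For all real α and β, all m ≥ 2, and all 1 ≤ k ≤ ⌊m/2⌋, let S_k = {x ∈ 𝔐²_m : |x|_U = k} and let A_k be the subset of S_k consisting of those 2-Motzkin paths in which the first D symbol appears immediately after a U (i.e., the symbol immediately preceding the first occurrence of D is a U). Then Σ_{x ∈ A_k} e^{−E(x)} = (2k/m) · Σ_{x ∈ S_k} e^{−E(x)}. -/
open Finset

/-- The four symbols of a 2-Motzkin path: up-step `U`, two colors of
horizontal steps `H` and `I`, and down-step `D`. -/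
inductive MSym : Type
  | U | H | I | D
  deriving DecidableEq

instance : Fintype MSym where
  elems := {MSym.U, MSym.H, MSym.I, MSym.D}
  complete := fun x => by cases x <;> simp

/-- `symCount x a` is `|x|_a`, the number of occurrences of the symbol `a` in `x`. -/
def symCount {m : ℕ} (x : Fin m → MSym) (a : MSym) : ℕ :=
  (Finset.univ.filter (fun i => x i = a)).card

/-- the number of occurrences of `a` among the first `j+1` symbols of `x`. -/
def symCountPrefix {m : ℕ} (x : Fin m → MSym) (a : MSym) (j : Fin m) : ℕ :=
  (Finset.univ.filter (fun i => i ≤ j ∧ x i = a)).card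

/-- `x` is a 2-Motzkin path: no prefix has more `D`s than `U`s, and the
total number of `U`s equals the total number of `D`s. -/
def IsMotzkin2 {m : ℕ} (x : Fin m → MSym) : Prop :=
  (∀ j : Fin m, symCountPrefix x MSym.D j ≤ symCountPrefix x MSym.U j) ∧
    symCount x MSym.U = symCount x MSym.D

instance {m : ℕ} : DecidablePred (IsMotzkin2 (m := m)) := fun _ => by
  unfold IsMotzkin2; infer_instance

/-- `𝔐²_m` : the set of 2-Motzkin paths of length `m`. -/
abbrev Motzkin2 (m : ℕ) : Type := {x : Fin m → MSym // IsMotzkin2 x}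

/-- The energy `E(x) = α(|x|_U + |x|_H + 1) + β |x|_I`. -/
noncomputable def energy (α β : ℝ) {m : ℕ} (x : Fin m → MSym) : ℝ :=
  α * ((symCount x MSym.U : ℝ) + (symCount x MSym.H : ℝ) + 1) + β * (symCount x MSym.I : ℝ)

/-- pairs of consecutive positions `(i, i+1)`. -/
def adjPairs (m : ℕ) : Finset (Fin m × Fin m) :=
  Finset.univ.filter (fun p => (p.2 : ℕ) = (p.1 : ℕ) + 1)

/-- The string `x` with the symbols `a`, `b` placed at positions `i`, `j`. -/
def setTwo {m : ℕ} (x : Fin m → MSym) (i j : Fin m) (a b : MSym) : Fin m → MSym :=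
  Function.update (Function.update x i a) j b

def isUD (a : MSym) : Prop := a = MSym.U ∨ a = MSym.D
def isHI (a : MSym) : Prop := a = MSym.H ∨ a = MSym.I
instance : DecidablePred isUD := fun a => by unfold isUD; infer_instance
instance : DecidablePred isHI := fun a => by unfold isHI; infer_instance

/-- The probability of moving from `x` to a *different* string `y` in one step
of the chain `M`: with probability 1/4 each, one of the four kinds of moves is
proposed (a uniformly random choice of positions together with the indicated
coin flips), and an (automatically valid) proposal `y ≠ x` is accepted with
probability 1/2. -/
noncomputable def stepWeight (α β : ℝ) {m : ℕ} (x y : Fin m → MSym) : ℝ :=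
  -- move 1 : UD ↔ HH at a random pair of consecutive positions
  (1/4) * (1/((m : ℝ) - 1)) * (1/2) *
    (∑ p ∈ adjPairs m,
      ((if x p.1 = MSym.U ∧ x p.2 = MSym.D ∧ y = setTwo x p.1 p.2 MSym.H MSym.H then
          Real.exp (-α) / (1 + Real.exp (-α)) else 0) +
       (if x p.1 = MSym.H ∧ x p.2 = MSym.H ∧ y = setTwo x p.1 p.2 MSym.U MSym.D then
          1 / (1 + Real.exp (-α)) else 0)))
  -- move 2 : H ↔ I at a random position
  + (1/4) * (1/(m : ℝ)) * (1/2) *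
    (∑ i : Fin m,
      ((if x i = MSym.I ∧ y = Function.update x i MSym.H then
          Real.exp (-α) / (Real.exp (-α) + Real.exp (-β)) else 0) +
       (if x i = MSym.H ∧ y = Function.update x i MSym.I then
          Real.exp (-β) / (Real.exp (-α) + Real.exp (-β)) else 0)))
  -- move 3 : swap the symbols at two uniform random positions, both in {U, D}
  + (1/4) * (1/((m : ℝ) * (m : ℝ))) * (1/2) *
    (∑ p : Fin m × Fin m,
      (if isUD (x p.1) ∧ isUD (x p.2) ∧ y = setTwo x p.1 p.2 (x p.2) (x p.1) then
        (1 : ℝ) else 0))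
  -- move 4 : reverse an adjacent pair consisting of one of {U,D} and one of {H,I}
  + (1/4) * (1/((m : ℝ) - 1)) * (1/2) *
    (∑ p ∈ adjPairs m,
      (if ((isUD (x p.1) ∧ isHI (x p.2)) ∨ (isHI (x p.1) ∧ isUD (x p.2))) ∧
          y = setTwo x p.1 p.2 (x p.2) (x p.1) then (1 : ℝ) else 0))

/-- The transition matrix of the Markov chain `M` on `𝔐²_m`: off the diagonal
the probability of the corresponding accepted move; proposals that are rejected,
invalid, or coincide with the current state contribute to the holding
probability on the diagonal. -/
noncomputable def transP (α β : ℝ) (m : ℕ) : Matrix (Motzkin2 m) (Motzkin2 m) ℝ :=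
  fun x y =>
    if x = y then
      1 - ∑ z : Motzkin2 m, (if z = x then 0 else stepWeight α β x.1 z.1)
    else stepWeight α β x.1 y.1

/-- The Gibbs distribution `π(x) = e^{-E(x)}/Z` on `𝔐²_m`. -/
noncomputable def gibbs (α β : ℝ) (m : ℕ) (x : Motzkin2 m) : ℝ :=
  Real.exp (-(energy α β x.1)) / ∑ y : Motzkin2 m, Real.exp (-(energy α β y.1))

/-- The spectral gap `1 - |λ₁|` of a transition matrix: one minus the largest
absolute value of an eigenvalue different from `λ₀ = 1`. -/
noncomputable def spectralGap {n : Type*} [Fintype n] [DecidableEq n]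
    (P : Matrix n n ℝ) : ℝ :=
  1 - sSup {r : ℝ | ∃ μ : ℂ,
    μ ∈ spectrum ℂ (P.map (fun t => (t : ℂ))) ∧ μ ≠ 1 ∧ r = ‖μ‖}

/-- `S_k = {x ∈ 𝔐²_m : |x|_U = k}`. -/
def Sset (m k : ℕ) : Finset (Motzkin2 m) :=
  Finset.univ.filter (fun x => symCount x.1 MSym.U = k)

/-- The first `D` symbol of `x` appears immediately after a `U`: there are
consecutive positions carrying `U`, `D`, with the latter the first `D` of `x`. -/
def firstDAfterU {m : ℕ} (x : Fin m → MSym) : Prop :=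
  ∃ p : Fin m × Fin m, (p.2 : ℕ) = (p.1 : ℕ) + 1 ∧
    x p.1 = MSym.U ∧ x p.2 = MSym.D ∧ ∀ i : Fin m, x i = MSym.D → p.2 ≤ i

instance {m : ℕ} : DecidablePred (firstDAfterU (m := m)) := fun _ => by
  unfold firstDAfterU; infer_instance
namespace MotzkinAux

variable {m n k : ℕ}

/-- positions of U/D symbols -/
def UDpos {m : ℕ} (x : Fin m → MSym) : Finset (Fin m) :=
  Finset.univ.filter fun p => isUD (x p)

lemma mem_UDpos {x : Fin m → MSym} {p : Fin m} :
    p ∈ UDpos x ↔ (x p = MSym.U ∨ x p = MSym.D) := by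
  unfold UDpos; rw [Finset.mem_filter]; simp [isUD]

lemma card_UDpos (x : Fin m → MSym) :
    (UDpos x).card = symCount x MSym.U + symCount x MSym.D := by
  classical
  have h : UDpos x
      = (univ.filter fun p => x p = MSym.U) ∪ (univ.filter fun p => x p = MSym.D) := by
    ext p; rw [mem_UDpos]; simp [Finset.mem_union]
  rw [h, Finset.card_union_of_disjoint, symCount, symCount]
  rw [Finset.disjoint_left]
  intro p hp1 hp2
  simp only [Finset.mem_filter] at hp1 hp2
  rw [hp1.2] at hp2
  exact absurd hp2.2 (by simp)

lemma rank_strictMono {S : Finset (Fin m)} {d d' : Fin m} (hd : d ∈ S) (h : d < d') :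
    (S.filter (· < d)).card < (S.filter (· < d')).card := by
  apply Finset.card_lt_card
  constructor
  · intro q hq
    simp only [Finset.mem_filter] at hq ⊢
    exact ⟨hq.1, lt_trans hq.2 h⟩
  · intro hsub
    have hmem : d ∈ S.filter (· < d') := by simp [hd, h]
    have := hsub hmem
    simp at this

lemma rank_inj {S : Finset (Fin m)} {d d' : Fin m} (hd : d ∈ S) (hd' : d' ∈ S)
    (h : (S.filter (· < d)).card = (S.filter (· < d')).card) : d = d' := by
  by_contra hne
  rcases lt_or_gt_of_ne hne with hlt | hlt
  · exact absurd h (Nat.ne_of_lt (rank_strictMono hd hlt))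
  · exact absurd h.symm (Nat.ne_of_lt (rank_strictMono hd' hlt))

lemma mem_iff_lt_card_of_downclosed (D : Finset (Fin n))
    (hdc : ∀ s t : Fin n, s ≤ t → t ∈ D → s ∈ D) (t : Fin n) :
    t ∈ D ↔ (t : ℕ) < D.card := by
  constructor
  · intro ht
    have hsub : Finset.Iic t ⊆ D := fun s hs => hdc s t (Finset.mem_Iic.mp hs) ht
    have hle := Finset.card_le_card hsub
    rw [Fin.card_Iic] at hle
    omega
  · intro ht
    by_contra hmem
    have hsub : D ⊆ Finset.Iio t := by
      intro q hq
      rw [Finset.mem_Iio]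
      by_contra hlt
      exact hmem (hdc t q (le_of_not_gt hlt) hq)
    have hle := Finset.card_le_card hsub
    rw [Fin.card_Iio] at hle
    omega

lemma filter_lt_orderEmbOfFin (S : Finset (Fin m)) (hS : S.card = n) (f : Fin n) :
    (S.filter (· < S.orderEmbOfFin hS f)).card = (f : ℕ) := by
  have himg : S.filter (· < S.orderEmbOfFin hS f)
      = (Finset.Iio f).image (S.orderEmbOfFin hS) := by
    ext q
    simp only [Finset.mem_filter, Finset.mem_image, Finset.mem_Iio]
    constructor
    · rintro ⟨hqS, hlt⟩
      have hq : q ∈ Set.range (S.orderEmbOfFin hS) := by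
        rw [Finset.range_orderEmbOfFin]; exact hqS
      obtain ⟨t, rfl⟩ := hq
      exact ⟨t, (OrderEmbedding.lt_iff_lt _).mp hlt, rfl⟩
    · rintro ⟨t, htf, rfl⟩
      exact ⟨Finset.orderEmbOfFin_mem _ _ _, (OrderEmbedding.lt_iff_lt _).mpr htf⟩
  rw [himg, Finset.card_image_of_injective _ (S.orderEmbOfFin hS).injective, Fin.card_Iio]

lemma eq_orderEmbOfFin_of_rank {S : Finset (Fin m)} (hS : S.card = n) {d : Fin m}
    (hd : d ∈ S) {f : Fin n} (hrk : (S.filter (· < d)).card = (f : ℕ)) :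
    d = S.orderEmbOfFin hS f := by
  have hd' : d ∈ Set.range (S.orderEmbOfFin hS) := by
    rw [Finset.range_orderEmbOfFin]; exact hd
  obtain ⟨t, rfl⟩ := hd'
  have h1 := filter_lt_orderEmbOfFin S hS t
  have : t = f := Fin.ext (by omega)
  rw [this]

/-- the word of U/D letters of `x`, read along `S` in increasing order -/
def wordOf (x : Fin m → MSym) (S : Finset (Fin m)) (hS : S.card = n) : Fin n → MSym :=
  fun t => x (S.orderEmbOfFin hS t)

def DyckCond {n : ℕ} (w : Fin n → MSym) : Prop :=
  ∀ r : ℕ, (univ.filter fun t : Fin n => (t : ℕ) < r ∧ w t = MSym.D).card ≤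
    (univ.filter fun t : Fin n => (t : ℕ) < r ∧ w t = MSym.U).card

lemma symCountPrefix_eq (x : Fin m → MSym) (S : Finset (Fin m)) (hS : S.card = n)
    (hx : UDpos x = S) {a : MSym} (ha : isUD a) (j : Fin m) :
    symCountPrefix x a j =
      (univ.filter fun t : Fin n =>
        S.orderEmbOfFin hS t ≤ j ∧ x (S.orderEmbOfFin hS t) = a).card := by
  rw [symCountPrefix]
  have himg : (univ.filter fun i : Fin m => i ≤ j ∧ x i = a)
      = (univ.filter fun t : Fin n =>
          S.orderEmbOfFin hS t ≤ j ∧ x (S.orderEmbOfFin hS t) = a).image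
          (S.orderEmbOfFin hS) := by
    ext i
    simp only [Finset.mem_filter, Finset.mem_image, Finset.mem_univ, true_and]
    constructor
    · rintro ⟨hij, hia⟩
      have hiS : i ∈ S := by
        rw [← hx, mem_UDpos]
        rcases ha with h | h <;> rw [h] at hia
        · exact Or.inl hia
        · exact Or.inr hia
      have hi : i ∈ Set.range (S.orderEmbOfFin hS) := by
        rw [Finset.range_orderEmbOfFin]; exact hiS
      obtain ⟨t, rfl⟩ := hi
      exact ⟨t, ⟨hij, hia⟩, rfl⟩
    · rintro ⟨t, ⟨h1, h2⟩, rfl⟩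
      exact ⟨h1, h2⟩
  rw [himg, Finset.card_image_of_injective _ (S.orderEmbOfFin hS).injective]

lemma ballot_iff_dyck (x : Fin m → MSym) (S : Finset (Fin m)) (hS : S.card = n)
    (hx : UDpos x = S) :
    (∀ j, symCountPrefix x MSym.D j ≤ symCountPrefix x MSym.U j) ↔
      DyckCond (wordOf x S hS) := by
  constructor
  · intro hb r
    by_cases hr : ∃ t : Fin n, (t : ℕ) < r
    · obtain ⟨t₁, ht₁⟩ := hr
      have hn0 : 0 < n := lt_of_le_of_lt (Nat.zero_le _) t₁.2
      set r' := min r n with hr'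
      have hr'1 : 1 ≤ r' := by omega
      have hr'n : r' - 1 < n := by omega
      set t₀ : Fin n := ⟨r' - 1, hr'n⟩ with ht₀
      set j := S.orderEmbOfFin hS t₀ with hj
      have hiff : ∀ t : Fin n, ((t : ℕ) < r ↔ S.orderEmbOfFin hS t ≤ j) := by
        intro t
        rw [hj, OrderEmbedding.le_iff_le]
        constructor
        · intro h
          show (t : ℕ) ≤ (t₀ : ℕ)
          simp only [ht₀]
          omega
        · intro h
          have : (t : ℕ) ≤ r' - 1 := h
          omega
      have := hb j
      rw [symCountPrefix_eq x S hS hx (by simp [isUD]) j,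
        symCountPrefix_eq x S hS hx (by simp [isUD]) j] at this
      have hDf : (univ.filter fun t : Fin n => (t : ℕ) < r ∧ wordOf x S hS t = MSym.D)
          = (univ.filter fun t : Fin n =>
              S.orderEmbOfFin hS t ≤ j ∧ x (S.orderEmbOfFin hS t) = MSym.D) := by
        apply Finset.filter_congr
        intro t _
        rw [wordOf]
        constructor
        · rintro ⟨h1, h2⟩; exact ⟨(hiff t).mp h1, h2⟩
        · rintro ⟨h1, h2⟩; exact ⟨(hiff t).mpr h1, h2⟩
      have hUf : (univ.filter fun t : Fin n => (t : ℕ) < r ∧ wordOf x S hS t = MSym.U)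
          = (univ.filter fun t : Fin n =>
              S.orderEmbOfFin hS t ≤ j ∧ x (S.orderEmbOfFin hS t) = MSym.U) := by
        apply Finset.filter_congr
        intro t _
        rw [wordOf]
        constructor
        · rintro ⟨h1, h2⟩; exact ⟨(hiff t).mp h1, h2⟩
        · rintro ⟨h1, h2⟩; exact ⟨(hiff t).mpr h1, h2⟩
      rw [hDf, hUf]
      exact this
    · push_neg at hr
      have hempty : ∀ a : MSym,
          (univ.filter fun t : Fin n => (t : ℕ) < r ∧ wordOf x S hS t = a) = ∅ := by
        intro a
        apply Finset.filter_false_of_mem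
        intro t _
        intro hcon
        exact absurd hcon.1 (not_lt.mpr (hr t))
      rw [hempty, hempty]
  · intro hd j
    set Dw := univ.filter fun t : Fin n => S.orderEmbOfFin hS t ≤ j with hDw
    have hdc : ∀ s t : Fin n, s ≤ t → t ∈ Dw → s ∈ Dw := by
      intro s t hst ht
      simp only [hDw, Finset.mem_filter, Finset.mem_univ, true_and] at ht ⊢
      exact le_trans ((S.orderEmbOfFin hS).monotone hst) ht
    have hiff : ∀ t : Fin n, (S.orderEmbOfFin hS t ≤ j ↔ (t : ℕ) < Dw.card) := by
      intro t
      rw [← mem_iff_lt_card_of_downclosed Dw hdc t]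
      simp [hDw]
    rw [symCountPrefix_eq x S hS hx (by simp [isUD]) j,
      symCountPrefix_eq x S hS hx (by simp [isUD]) j]
    have hDf : (univ.filter fun t : Fin n =>
          S.orderEmbOfFin hS t ≤ j ∧ x (S.orderEmbOfFin hS t) = MSym.D)
        = (univ.filter fun t : Fin n => (t : ℕ) < Dw.card ∧ wordOf x S hS t = MSym.D) := by
      apply Finset.filter_congr
      intro t _
      rw [wordOf]
      constructor
      · rintro ⟨h1, h2⟩; exact ⟨(hiff t).mp h1, h2⟩
      · rintro ⟨h1, h2⟩; exact ⟨(hiff t).mpr h1, h2⟩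
    have hUf : (univ.filter fun t : Fin n =>
          S.orderEmbOfFin hS t ≤ j ∧ x (S.orderEmbOfFin hS t) = MSym.U)
        = (univ.filter fun t : Fin n => (t : ℕ) < Dw.card ∧ wordOf x S hS t = MSym.U) := by
      apply Finset.filter_congr
      intro t _
      rw [wordOf]
      constructor
      · rintro ⟨h1, h2⟩; exact ⟨(hiff t).mp h1, h2⟩
      · rintro ⟨h1, h2⟩; exact ⟨(hiff t).mpr h1, h2⟩
    rw [hDf, hUf]
    exact hd Dw.card

end MotzkinAux
namespace MotzkinAux

variable {m n k : ℕ}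

lemma card_compl_of (S : Finset (Fin m)) (hS : S.card = n) : Sᶜ.card = m - n := by
  rw [Finset.card_compl, hS, Fintype.card_fin]

/-- the permutation of positions carrying `S` to `T` and `Sᶜ` to `Tᶜ` monotonically -/
def gmap (S T : Finset (Fin m)) (hS : S.card = n) (hT : T.card = n) : Fin m → Fin m :=
  fun p =>
    if h : p ∈ S then T.orderEmbOfFin hT ((S.orderIsoOfFin hS).symm ⟨p, h⟩)
    else Tᶜ.orderEmbOfFin (card_compl_of T hT)
      ((Sᶜ.orderIsoOfFin (card_compl_of S hS)).symm ⟨p, Finset.mem_compl.mpr h⟩)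

lemma gmap_emb (S T : Finset (Fin m)) (hS : S.card = n) (hT : T.card = n) (t : Fin n) :
    gmap S T hS hT (S.orderEmbOfFin hS t) = T.orderEmbOfFin hT t := by
  rw [gmap, dif_pos (Finset.orderEmbOfFin_mem S hS t)]
  congr 1
  rw [OrderIso.symm_apply_eq]
  apply Subtype.ext
  rw [Finset.coe_orderIsoOfFin_apply]

lemma gmap_embc (S T : Finset (Fin m)) (hS : S.card = n) (hT : T.card = n) (t : Fin (m - n)) :
    gmap S T hS hT (Sᶜ.orderEmbOfFin (card_compl_of S hS) t)
      = Tᶜ.orderEmbOfFin (card_compl_of T hT) t := by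
  have hmem : Sᶜ.orderEmbOfFin (card_compl_of S hS) t ∈ Sᶜ :=
    Finset.orderEmbOfFin_mem _ _ _
  rw [gmap, dif_neg (Finset.mem_compl.mp hmem)]
  congr 1
  rw [OrderIso.symm_apply_eq]
  apply Subtype.ext
  rw [Finset.coe_orderIsoOfFin_apply]

lemma gmap_mem_iff (S T : Finset (Fin m)) (hS : S.card = n) (hT : T.card = n) (p : Fin m) :
    gmap S T hS hT p ∈ T ↔ p ∈ S := by
  rw [gmap]
  by_cases h : p ∈ S
  · rw [dif_pos h]
    simp [Finset.orderEmbOfFin_mem, h]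
  · rw [dif_neg h]
    have : Tᶜ.orderEmbOfFin (card_compl_of T hT)
        ((Sᶜ.orderIsoOfFin (card_compl_of S hS)).symm ⟨p, Finset.mem_compl.mpr h⟩) ∈ Tᶜ :=
      Finset.orderEmbOfFin_mem _ _ _
    simp only [Finset.mem_compl] at this
    simp [this, h]

lemma gmap_gmap (S T : Finset (Fin m)) (hS : S.card = n) (hT : T.card = n) (p : Fin m) :
    gmap T S hT hS (gmap S T hS hT p) = p := by
  by_cases h : p ∈ S
  · have hp : p ∈ Set.range (S.orderEmbOfFin hS) := by
      rw [Finset.range_orderEmbOfFin]; exact h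
    obtain ⟨t, rfl⟩ := hp
    rw [gmap_emb, gmap_emb]
  · have hp : p ∈ Set.range (Sᶜ.orderEmbOfFin (card_compl_of S hS)) := by
      rw [Finset.range_orderEmbOfFin]; exact Finset.mem_compl.mpr h
    obtain ⟨t, rfl⟩ := hp
    rw [gmap_embc, gmap_embc]

lemma gmap_bijective (S T : Finset (Fin m)) (hS : S.card = n) (hT : T.card = n) :
    Function.Bijective (gmap S T hS hT) := by
  apply Function.bijective_iff_has_inverse.mpr
  exact ⟨gmap T S hT hS, gmap_gmap S T hS hT, gmap_gmap T S hT hS⟩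

lemma symCount_comp (x : Fin m → MSym) {g : Fin m → Fin m} (hg : Function.Bijective g)
    (a : MSym) : symCount (fun i => x (g i)) a = symCount x a := by
  rw [symCount, symCount]
  apply Finset.card_bij (fun i _ => g i)
  · intro i hi
    simp only [Finset.mem_filter, Finset.mem_univ, true_and] at hi ⊢
    exact hi
  · intro i₁ _ i₂ _ h
    exact hg.1 h
  · intro i' hi'
    obtain ⟨i, rfl⟩ := hg.2 i'
    simp only [Finset.mem_filter, Finset.mem_univ, true_and] at hi'
    exact ⟨i, by simp [hi'], rfl⟩

lemma energy_comp (α β : ℝ) (x : Fin m → MSym) {g : Fin m → Fin m}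
    (hg : Function.Bijective g) : energy α β (fun i => x (g i)) = energy α β x := by
  rw [energy, energy, symCount_comp x hg, symCount_comp x hg, symCount_comp x hg]

lemma UDpos_gmap (x : Fin m → MSym) (S T : Finset (Fin m)) (hS : S.card = n)
    (hT : T.card = n) (hx : UDpos x = T) :
    UDpos (fun p => x (gmap S T hS hT p)) = S := by
  ext p
  rw [mem_UDpos, ← mem_UDpos (x := x) (p := gmap S T hS hT p), hx]
  exact gmap_mem_iff S T hS hT p

lemma wordOf_gmap (x : Fin m → MSym) (S T : Finset (Fin m)) (hS : S.card = n)
    (hT : T.card = n) :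
    wordOf (fun p => x (gmap S T hS hT p)) S hS = wordOf x T hT := by
  funext t
  rw [wordOf, wordOf, gmap_emb]

lemma isMotzkin2_gmap (x : Fin m → MSym) (S T : Finset (Fin m)) (hS : S.card = n)
    (hT : T.card = n) (hx : UDpos x = T) (hmx : IsMotzkin2 x) :
    IsMotzkin2 (fun p => x (gmap S T hS hT p)) := by
  constructor
  · rw [ballot_iff_dyck _ S hS (UDpos_gmap x S T hS hT hx), wordOf_gmap]
    exact (ballot_iff_dyck x T hT hx).mp hmx.1
  · rw [symCount_comp x (gmap_bijective S T hS hT), symCount_comp x (gmap_bijective S T hS hT)]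
    exact hmx.2

end MotzkinAux
namespace MotzkinAux

variable {m n k : ℕ}

/-- positions of `D` symbols -/
def Dfil {m : ℕ} (x : Fin m → MSym) : Finset (Fin m) :=
  Finset.univ.filter fun i => x i = MSym.D

/-- the rank (within the U/D positions) of the first `D` of `x` -/
def fNat {m : ℕ} (x : Fin m → MSym) : ℕ :=
  if h : (Dfil x).Nonempty then ((UDpos x).filter (· < (Dfil x).min' h)).card else 0

lemma Dfil_nonempty {x : Fin m → MSym} (hk : 1 ≤ k) (hD : symCount x MSym.D = k) :
    (Dfil x).Nonempty := by
  rw [← Finset.card_pos]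
  show 0 < (Finset.univ.filter fun i => x i = MSym.D).card
  rw [← symCount, hD]
  omega

lemma exists_firstD (x : Fin m → MSym) (S : Finset (Fin m)) (hS : S.card = n)
    (hx : UDpos x = S) (hne : (Dfil x).Nonempty) :
    ∃ t : Fin n, (Dfil x).min' hne = S.orderEmbOfFin hS t ∧
      wordOf x S hS t = MSym.D ∧ fNat x = (t : ℕ) ∧
      (∀ t' : Fin n, wordOf x S hS t' = MSym.D → t ≤ t') := by
  have hwne : (Finset.univ.filter fun t : Fin n => wordOf x S hS t = MSym.D).Nonempty := by
    obtain ⟨i, hi⟩ := hne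
    simp only [Dfil, Finset.mem_filter, Finset.mem_univ, true_and] at hi
    have hiS : i ∈ S := by rw [← hx, mem_UDpos]; exact Or.inr hi
    have hir : i ∈ Set.range (S.orderEmbOfFin hS) := by
      rw [Finset.range_orderEmbOfFin]; exact hiS
    obtain ⟨t, rfl⟩ := hir
    exact ⟨t, by simp only [Finset.mem_filter, Finset.mem_univ, true_and]; exact hi⟩
  set t := (Finset.univ.filter fun t : Fin n => wordOf x S hS t = MSym.D).min' hwne with htdef
  have htD : wordOf x S hS t = MSym.D := by
    have := Finset.min'_mem _ hwne
    simp only [Finset.mem_filter] at this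
    exact this.2
  have htmin : ∀ t' : Fin n, wordOf x S hS t' = MSym.D → t ≤ t' := by
    intro t' ht'
    apply Finset.min'_le
    simp only [Finset.mem_filter, Finset.mem_univ, true_and]
    exact ht'
  have hminD : (Dfil x).min' hne = S.orderEmbOfFin hS t := by
    apply le_antisymm
    · apply Finset.min'_le
      simp only [Dfil, Finset.mem_filter, Finset.mem_univ, true_and]
      exact htD
    · apply Finset.le_min'
      intro i hi
      simp only [Dfil, Finset.mem_filter, Finset.mem_univ, true_and] at hi
      have hiS : i ∈ S := by rw [← hx, mem_UDpos]; exact Or.inr hi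
      have hir : i ∈ Set.range (S.orderEmbOfFin hS) := by
        rw [Finset.range_orderEmbOfFin]; exact hiS
      obtain ⟨t', rfl⟩ := hir
      exact (S.orderEmbOfFin hS).monotone (htmin t' hi)
  refine ⟨t, hminD, htD, ?_, htmin⟩
  rw [fNat, dif_pos hne, hminD, hx]
  exact filter_lt_orderEmbOfFin S hS t

lemma fNat_lt (x : Fin m → MSym) (S : Finset (Fin m)) (hS : S.card = n)
    (hx : UDpos x = S) (hne : (Dfil x).Nonempty) : fNat x < n := by
  obtain ⟨t, _, _, ht, _⟩ := exists_firstD x S hS hx hne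
  rw [ht]
  exact t.2

lemma fNat_gmap (x : Fin m → MSym) (S T : Finset (Fin m)) (hS : S.card = n)
    (hT : T.card = n) (hx : UDpos x = T) (hne : (Dfil x).Nonempty) :
    fNat (fun p => x (gmap S T hS hT p)) = fNat x := by
  obtain ⟨t, _, htD, htval, htmin⟩ := exists_firstD x T hT hx hne
  have hne' : (Dfil fun p => x (gmap S T hS hT p)).Nonempty := by
    refine ⟨S.orderEmbOfFin hS t, ?_⟩
    simp only [Dfil, Finset.mem_filter, Finset.mem_univ, true_and]
    rw [gmap_emb]
    exact htD
  obtain ⟨t', _, htD', htval', htmin'⟩ :=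
    exists_firstD _ S hS (UDpos_gmap x S T hS hT hx) hne'
  rw [wordOf_gmap] at htD' htmin'
  have h1 : t ≤ t' := htmin t' htD'
  have h2 : t' ≤ t := htmin' t htD
  rw [htval, htval', le_antisymm h1 h2]

lemma fNat_pos (x : Fin m → MSym) (S : Finset (Fin m)) (hS : S.card = n)
    (hx : UDpos x = S) (hne : (Dfil x).Nonempty)
    (hb : ∀ j, symCountPrefix x MSym.D j ≤ symCountPrefix x MSym.U j) :
    1 ≤ fNat x := by
  obtain ⟨t, hmin, htD, htval, _⟩ := exists_firstD x S hS hx hne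
  rw [htval]
  by_contra h0
  have ht0 : (t : ℕ) = 0 := by omega
  set j := S.orderEmbOfFin hS t with hj
  have hD1 : 1 ≤ symCountPrefix x MSym.D j := by
    rw [symCountPrefix]
    rw [Nat.one_le_iff_ne_zero, ← Nat.pos_iff_ne_zero, Finset.card_pos]
    refine ⟨j, ?_⟩
    simp only [Finset.mem_filter, Finset.mem_univ, true_and]
    exact ⟨le_refl _, htD⟩
  have hU0 : symCountPrefix x MSym.U j = 0 := by
    rw [symCountPrefix_eq x S hS hx (by simp [isUD]) j, Finset.card_eq_zero]
    apply Finset.filter_false_of_mem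
    intro t' _ hcon
    have hle : t' ≤ t := by
      have := hcon.1
      rw [hj, OrderEmbedding.le_iff_le] at this
      exact this
    have : t' = t := le_antisymm hle (by rw [Fin.le_def, ht0]; omega)
    rw [this] at hcon
    have hxx : x (S.orderEmbOfFin hS t) = MSym.D := htD
    rw [hxx] at hcon
    exact absurd hcon.2 (by simp)
  have := hb j
  omega

lemma firstDAfterU_iff (x : Fin m → MSym) (S : Finset (Fin m))
    (hx : UDpos x = S) (hne : (Dfil x).Nonempty) :
    firstDAfterU x ↔
      ∃ d ∈ S, (∃ p ∈ S, (p : ℕ) + 1 = (d : ℕ)) ∧ (S.filter (· < d)).card = fNat x := by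
  have hd₀mem : (Dfil x).min' hne ∈ Dfil x := Finset.min'_mem _ _
  simp only [Dfil, Finset.mem_filter, Finset.mem_univ, true_and] at hd₀mem
  have hd₀S : (Dfil x).min' hne ∈ S := by rw [← hx, mem_UDpos]; exact Or.inr hd₀mem
  have hfdef : fNat x = (S.filter (· < (Dfil x).min' hne)).card := by
    rw [fNat, dif_pos hne, hx]
  constructor
  · rintro ⟨⟨p₁, p₂⟩, h21, hU, hD, hmin⟩
    refine ⟨p₂, ?_, ⟨p₁, ?_, h21.symm⟩, ?_⟩
    · rw [← hx, mem_UDpos]; exact Or.inr hD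
    · rw [← hx, mem_UDpos]; exact Or.inl hU
    · have hp₂ : p₂ = (Dfil x).min' hne := by
        apply le_antisymm (hmin _ hd₀mem)
        apply Finset.min'_le
        simp only [Dfil, Finset.mem_filter, Finset.mem_univ, true_and]
        exact hD
      rw [hp₂, hfdef]
  · rintro ⟨d, hdS, ⟨p, hpS, hp1⟩, hrk⟩
    have hd : d = (Dfil x).min' hne := by
      apply rank_inj hdS hd₀S
      rw [hrk, hfdef]
    have hpd : p < d := by rw [Fin.lt_def]; omega
    have hpU : x p = MSym.U := by
      have := hpS
      rw [← hx, mem_UDpos] at this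
      rcases this with h | h
      · exact h
      · exfalso
        have : (Dfil x).min' hne ≤ p := by
          apply Finset.min'_le
          simp only [Dfil, Finset.mem_filter, Finset.mem_univ, true_and]
          exact h
        rw [← hd] at this
        exact absurd hpd (not_lt.mpr this)
    refine ⟨(p, d), hp1.symm, hpU, by rw [hd]; exact hd₀mem, ?_⟩
    intro i hi
    rw [hd]
    apply Finset.min'_le
    simp only [Dfil, Finset.mem_filter, Finset.mem_univ, true_and]
    exact hi

end MotzkinAux
namespace MotzkinAux

lemma vand (a : ℕ) : ∀ (M b : ℕ),
    ∑ i ∈ Finset.range (M + 1), (Nat.choose i a) * (Nat.choose (M - i) b)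
      = Nat.choose (M + 1) (a + b + 1)
  | 0, b => by
    rw [Finset.sum_range_one]
    match a, b with
    | 0, 0 => rfl
    | 0, b + 1 => simp [Nat.choose_eq_zero_of_lt]
    | a + 1, b => simp [Nat.choose_eq_zero_of_lt, Nat.choose_eq_zero_of_lt (by omega : 1 < a + b + 2)]
  | (M + 1), 0 => by
    have h1 : ∀ i ∈ Finset.range (M + 2), (Nat.choose i a) * (Nat.choose (M + 1 - i) 0)
        = Nat.choose i a := by
      intro i _
      rw [Nat.choose_zero_right, mul_one]
    rw [Finset.sum_congr rfl h1]
    rcases le_or_gt a (M + 1) with hle | hlt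
    · rw [Finset.range_eq_Ico, ← Finset.sum_Ico_consecutive _ (Nat.zero_le a) (by omega : a ≤ M + 2)]
      have h2 : ∀ i ∈ Finset.Ico 0 a, Nat.choose i a = 0 := by
        intro i hi
        rw [Finset.mem_Ico] at hi
        exact Nat.choose_eq_zero_of_lt hi.2
      rw [Finset.sum_congr rfl h2, Finset.sum_const_zero, zero_add,
        (show Finset.Ico a (M + 2) = Finset.Icc a (M + 1) from Finset.Ico_add_one_right_eq_Icc a (M + 1)), Nat.sum_Icc_choose, Nat.add_zero]
    · have h2 : ∀ i ∈ Finset.range (M + 2), Nat.choose i a = 0 := by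
        intro i hi
        rw [Finset.mem_range] at hi
        exact Nat.choose_eq_zero_of_lt (by omega)
      rw [Finset.sum_congr rfl h2, Finset.sum_const_zero, Nat.add_zero,
        Nat.choose_eq_zero_of_lt (by omega)]
  | (M + 1), (b + 1) => by
    rw [Finset.sum_range_succ]
    have hlast : Nat.choose (M + 1) a * Nat.choose (M + 1 - (M + 1)) (b + 1) = 0 := by
      simp
    rw [hlast, add_zero]
    have hsplit : ∀ i ∈ Finset.range (M + 1),
        (Nat.choose i a) * (Nat.choose (M + 1 - i) (b + 1))
          = (Nat.choose i a) * (Nat.choose (M - i) b)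
            + (Nat.choose i a) * (Nat.choose (M - i) (b + 1)) := by
      intro i hi
      rw [Finset.mem_range] at hi
      have h : M + 1 - i = (M - i) + 1 := by omega
      rw [h, Nat.choose_succ_succ, Nat.mul_add]
    rw [Finset.sum_congr rfl hsplit, Finset.sum_add_distrib, vand a M b, vand a M (b + 1)]
    have : a + (b + 1) + 1 = (a + b + 1) + 1 := by omega
    rw [this, Nat.choose_succ_succ (M + 1) (a + b + 1)]

end MotzkinAux
namespace MotzkinAux

lemma Qcard (m n f : ℕ) (hf1 : 1 ≤ f) (hfn : f < n) (d : Fin m) (hd0 : (d : ℕ) ≠ 0) :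
    ((Finset.powersetCard n (Finset.univ : Finset (Fin m))).filter
      (fun S => d ∈ S ∧ (∃ p : Fin m, p ∈ S ∧ (p : ℕ) + 1 = (d : ℕ)) ∧ (S.filter (· < d)).card = f)).card
    = ((d : ℕ) - 1).choose (f - 1) * (m - 1 - (d : ℕ)).choose (n - 1 - f) := by
  classical
  obtain ⟨dv, hdv⟩ : ∃ dv, (d : ℕ) = dv + 1 := ⟨(d : ℕ) - 1, by omega⟩
  set p₀ : Fin m := ⟨dv, by omega⟩ with hp₀def
  have hp₀1 : (p₀ : ℕ) + 1 = (d : ℕ) := by show dv + 1 = (d : ℕ); omega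
  have hp₀d : p₀ < d := by rw [Fin.lt_def]; omega
  have hp₀ne : p₀ ≠ d := ne_of_lt hp₀d
  have key : ((Finset.powersetCard n (Finset.univ : Finset (Fin m))).filter
      (fun S => d ∈ S ∧ (∃ p : Fin m, p ∈ S ∧ (p : ℕ) + 1 = (d : ℕ)) ∧ (S.filter (· < d)).card = f)).card
      = ((Finset.powersetCard (f - 1) (Finset.Iio p₀)) ×ˢ
          (Finset.powersetCard (n - 1 - f) (Finset.Ioi d))).card := by
    apply Finset.card_nbij' (i := fun S => (S ∩ Finset.Iio p₀, S ∩ Finset.Ioi d))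
      (j := fun A => A.1 ∪ A.2 ∪ {p₀, d})
    · -- hi
      intro S hS
      simp only [Finset.mem_coe, Finset.mem_filter, Finset.mem_powersetCard_univ] at hS
      obtain ⟨hcard, hdS, hex, hrk⟩ := hS
      obtain ⟨p, hpS, hp1⟩ := hex
      have hpp₀ : p = p₀ := Fin.ext (by omega)
      rw [hpp₀] at hpS
      have h1 : S.filter (· < d) = (S ∩ Finset.Iio p₀) ∪ {p₀} := by
        ext q
        simp only [Finset.mem_filter, Finset.mem_union, Finset.mem_inter,
          Finset.mem_Iio, Finset.mem_singleton]
        constructor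
        · rintro ⟨hq, hlt⟩
          by_cases hqp : q = p₀
          · exact Or.inr hqp
          · have hne : (q : ℕ) ≠ (p₀ : ℕ) := fun h => hqp (Fin.ext h)
            have : (q : ℕ) < (d : ℕ) := hlt
            exact Or.inl ⟨hq, by rw [Fin.lt_def]; omega⟩
        · rintro (⟨hq, hlt⟩ | rfl)
          · exact ⟨hq, lt_trans hlt hp₀d⟩
          · exact ⟨hpS, hp₀d⟩
      have hd1 : (S ∩ Finset.Iio p₀).card + 1 = f := by
        rw [← hrk, h1, Finset.card_union_of_disjoint, Finset.card_singleton]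
        rw [Finset.disjoint_singleton_right]
        simp
      have h2 : S ∩ Finset.Ioi d = S \ (S.filter (· ≤ d)) := by
        ext q
        simp only [Finset.mem_inter, Finset.mem_Ioi, Finset.mem_sdiff, Finset.mem_filter]
        constructor
        · rintro ⟨hq, hlt⟩
          exact ⟨hq, fun hc => absurd hlt (not_lt.mpr hc.2)⟩
        · rintro ⟨hq, hc⟩
          refine ⟨hq, lt_of_not_ge fun hle => hc ⟨hq, hle⟩⟩
      have h3 : S.filter (· ≤ d) = S.filter (· < d) ∪ {d} := by
        ext q
        simp only [Finset.mem_filter, Finset.mem_union, Finset.mem_singleton]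
        constructor
        · rintro ⟨hq, hle⟩
          rcases lt_or_eq_of_le hle with h | h
          · exact Or.inl ⟨hq, h⟩
          · exact Or.inr h
        · rintro (⟨hq, hlt⟩ | rfl)
          · exact ⟨hq, le_of_lt hlt⟩
          · exact ⟨hdS, le_refl _⟩
      have h4 : (S.filter (· ≤ d)).card = f + 1 := by
        rw [h3, Finset.card_union_of_disjoint, Finset.card_singleton, hrk]
        rw [Finset.disjoint_singleton_right]
        simp
      have h5 : (S ∩ Finset.Ioi d).card = n - 1 - f := by
        rw [h2, Finset.card_sdiff_of_subset (Finset.filter_subset _ _), h4, hcard]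
        omega
      simp only [Finset.mem_coe, Finset.mem_product, Finset.mem_powersetCard]
      exact ⟨⟨Finset.inter_subset_right, by omega⟩, ⟨Finset.inter_subset_right, h5⟩⟩
    · -- hj
      rintro ⟨A₁, A₂⟩ hA
      simp only [Finset.mem_coe, Finset.mem_product, Finset.mem_powersetCard] at hA
      obtain ⟨⟨hA₁sub, hA₁card⟩, ⟨hA₂sub, hA₂card⟩⟩ := hA
      have hA₁lt : ∀ q ∈ A₁, q < p₀ := fun q hq => Finset.mem_Iio.mp (hA₁sub hq)
      have hA₂gt : ∀ q ∈ A₂, d < q := fun q hq => Finset.mem_Ioi.mp (hA₂sub hq)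
      have hcard : (A₁ ∪ A₂ ∪ {p₀, d}).card = n := by
        rw [Finset.card_union_of_disjoint, Finset.card_union_of_disjoint]
        · have : ({p₀, d} : Finset (Fin m)).card = 2 := by
            rw [Finset.card_insert_of_notMem (by simpa using hp₀ne), Finset.card_singleton]
          rw [this, hA₁card, hA₂card]
          omega
        · rw [Finset.disjoint_left]
          intro q hq₁ hq₂
          have h1 := hA₁lt q hq₁
          have h2 := hA₂gt q hq₂
          have := lt_trans (lt_trans h1 hp₀d) h2
          exact absurd rfl (ne_of_lt this)
        · rw [Finset.disjoint_left]
          intro q hq₁ hq₂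
          simp only [Finset.mem_union] at hq₁
          simp only [Finset.mem_insert, Finset.mem_singleton] at hq₂
          rcases hq₁ with hq₁ | hq₁
          · have h1 := hA₁lt q hq₁
            rcases hq₂ with rfl | rfl
            · exact absurd h1 (lt_irrefl _)
            · exact absurd (lt_trans h1 hp₀d) (lt_irrefl _)
          · have h1 := hA₂gt q hq₁
            rcases hq₂ with rfl | rfl
            · exact absurd (lt_trans hp₀d h1) (lt_irrefl _)
            · exact absurd h1 (lt_irrefl _)
      have hd_mem : d ∈ A₁ ∪ A₂ ∪ {p₀, d} := by simp
      have hp₀_mem : p₀ ∈ A₁ ∪ A₂ ∪ {p₀, d} := by simp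
      have hrk : ((A₁ ∪ A₂ ∪ {p₀, d}).filter (· < d)).card = f := by
        have heq : (A₁ ∪ A₂ ∪ {p₀, d}).filter (· < d) = A₁ ∪ {p₀} := by
          ext q
          simp only [Finset.mem_filter, Finset.mem_union, Finset.mem_insert,
            Finset.mem_singleton]
          constructor
          · rintro ⟨(hq | hq) | (rfl | rfl), hlt⟩
            · exact Or.inl hq
            · exact absurd (lt_trans (hA₂gt q hq) hlt) (lt_irrefl _)
            · exact Or.inr rfl
            · exact absurd hlt (lt_irrefl _)
          · rintro (hq | rfl)
            · exact ⟨Or.inl (Or.inl hq), lt_trans (hA₁lt q hq) hp₀d⟩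
            · exact ⟨Or.inr (Or.inl rfl), hp₀d⟩
        rw [heq, Finset.card_union_of_disjoint, Finset.card_singleton, hA₁card]
        · omega
        · rw [Finset.disjoint_singleton_right]
          intro hc
          exact absurd (hA₁lt p₀ hc) (lt_irrefl _)
      simp only [Finset.mem_coe, Finset.mem_filter, Finset.mem_powersetCard_univ]
      exact ⟨hcard, hd_mem, ⟨p₀, hp₀_mem, hp₀1⟩, hrk⟩
    · -- left_inv
      intro S hS
      simp only [Finset.mem_coe, Finset.mem_filter, Finset.mem_powersetCard_univ] at hS
      obtain ⟨hcard, hdS, hex, hrk⟩ := hS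
      obtain ⟨p, hpS, hp1⟩ := hex
      have hpp₀ : p = p₀ := Fin.ext (by omega)
      rw [hpp₀] at hpS
      ext q
      simp only [Finset.mem_union, Finset.mem_inter, Finset.mem_Iio, Finset.mem_Ioi,
        Finset.mem_insert, Finset.mem_singleton]
      constructor
      · rintro ((⟨hq, _⟩ | ⟨hq, _⟩) | (rfl | rfl))
        · exact hq
        · exact hq
        · exact hpS
        · exact hdS
      · intro hq
        rcases lt_trichotomy q p₀ with h | h | h
        · exact Or.inl (Or.inl ⟨hq, h⟩)
        · exact Or.inr (Or.inl h)
        · rcases lt_trichotomy q d with h' | h' | h'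
          · exfalso
            rw [Fin.lt_def] at h h'
            omega
          · exact Or.inr (Or.inr h')
          · exact Or.inl (Or.inr ⟨hq, h'⟩)
    · -- right_inv
      rintro ⟨A₁, A₂⟩ hA
      simp only [Finset.mem_coe, Finset.mem_product, Finset.mem_powersetCard] at hA
      obtain ⟨⟨hA₁sub, _⟩, ⟨hA₂sub, _⟩⟩ := hA
      have hA₁lt : ∀ q ∈ A₁, q < p₀ := fun q hq => Finset.mem_Iio.mp (hA₁sub hq)
      have hA₂gt : ∀ q ∈ A₂, d < q := fun q hq => Finset.mem_Ioi.mp (hA₂sub hq)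
      have e1 : (A₁ ∪ A₂ ∪ {p₀, d}) ∩ Finset.Iio p₀ = A₁ := by
        ext q
        simp only [Finset.mem_inter, Finset.mem_union, Finset.mem_Iio, Finset.mem_insert,
          Finset.mem_singleton]
        constructor
        · rintro ⟨(hq | hq) | (rfl | rfl), hlt⟩
          · exact hq
          · exact absurd (lt_trans (lt_trans hp₀d (hA₂gt q hq)) hlt) (lt_irrefl _)
          · exact absurd hlt (lt_irrefl _)
          · exact absurd (lt_trans hp₀d hlt) (lt_irrefl _)
        · intro hq
          exact ⟨Or.inl (Or.inl hq), hA₁lt q hq⟩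
      have e2 : (A₁ ∪ A₂ ∪ {p₀, d}) ∩ Finset.Ioi d = A₂ := by
        ext q
        simp only [Finset.mem_inter, Finset.mem_union, Finset.mem_Ioi, Finset.mem_insert,
          Finset.mem_singleton]
        constructor
        · rintro ⟨(hq | hq) | (rfl | rfl), hlt⟩
          · exact absurd (lt_trans (lt_trans (hA₁lt q hq) hp₀d) hlt) (lt_irrefl _)
          · exact hq
          · exact absurd (lt_trans hp₀d hlt) (lt_irrefl _)
          · exact absurd hlt (lt_irrefl _)
        · intro hq
          exact ⟨Or.inl (Or.inr hq), hA₂gt q hq⟩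
      rw [Prod.mk.injEq]
      exact ⟨e1, e2⟩
  rw [key, Finset.card_product, Finset.card_powersetCard, Finset.card_powersetCard,
    Fin.card_Iio, Fin.card_Ioi]
  have hv : (p₀ : ℕ) = (d : ℕ) - 1 := by omega
  rw [hv]

end MotzkinAux
namespace MotzkinAux

lemma countAdj (m n f : ℕ) (hm : 2 ≤ m) (hf1 : 1 ≤ f) (hfn : f < n) :
    ((Finset.powersetCard n (Finset.univ : Finset (Fin m))).filter
      (fun S => ∃ d : Fin m, d ∈ S ∧ (∃ p : Fin m, p ∈ S ∧ (p : ℕ) + 1 = (d : ℕ)) ∧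
        (S.filter (· < d)).card = f)).card
    = (m - 1).choose (n - 1) := by
  classical
  set Q : Fin m → Finset (Finset (Fin m)) := fun d =>
    (Finset.powersetCard n (Finset.univ : Finset (Fin m))).filter
      (fun S => d ∈ S ∧ (∃ p : Fin m, p ∈ S ∧ (p : ℕ) + 1 = (d : ℕ)) ∧
        (S.filter (· < d)).card = f) with hQ
  have hbU : ((Finset.powersetCard n (Finset.univ : Finset (Fin m))).filter
      (fun S => ∃ d : Fin m, d ∈ S ∧ (∃ p : Fin m, p ∈ S ∧ (p : ℕ) + 1 = (d : ℕ)) ∧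
        (S.filter (· < d)).card = f)) = Finset.univ.biUnion Q := by
    ext S
    simp only [hQ, Finset.mem_biUnion, Finset.mem_filter, Finset.mem_univ, true_and]
    constructor
    · rintro ⟨h1, d, hd⟩
      exact ⟨d, h1, hd⟩
    · rintro ⟨d, h1, hd⟩
      exact ⟨h1, d, hd⟩
  rw [hbU, Finset.card_biUnion]
  · have hQc : ∀ d : Fin m, (Q d).card
        = (fun i : ℕ => if i = 0 then 0
            else (i - 1).choose (f - 1) * (m - 1 - i).choose (n - 1 - f)) (d : ℕ) := by
      intro d
      by_cases h0 : (d : ℕ) = 0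
      · have hE : Q d = ∅ := by
          rw [hQ, Finset.filter_eq_empty_iff]
          rintro S _ ⟨_, ⟨p, _, hp1⟩, _⟩
          omega
        rw [hE, Finset.card_empty]
        simp [h0]
      · simp only [if_neg h0]
        exact Qcard m n f hf1 hfn d h0
    rw [Finset.sum_congr rfl (fun d _ => hQc d)]
    rw [Fin.sum_univ_eq_sum_range (fun i : ℕ => if i = 0 then 0
      else (i - 1).choose (f - 1) * (m - 1 - i).choose (n - 1 - f)) m]
    obtain ⟨m', rfl⟩ : ∃ m', m = m' + 1 := ⟨m - 1, by omega⟩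
    rw [Finset.sum_range_succ']
    rw [if_pos rfl, add_zero]
    have hredo : ∀ i ∈ Finset.range m',
        (if i + 1 = 0 then 0 else (i + 1 - 1).choose (f - 1)
          * (m' + 1 - 1 - (i + 1)).choose (n - 1 - f))
        = i.choose (f - 1) * ((m' - 1) - i).choose (n - 1 - f) := by
      intro i hi
      rw [if_neg (Nat.succ_ne_zero i)]
      congr 2 <;> omega
    rw [Finset.sum_congr rfl hredo]
    obtain ⟨M, rfl⟩ : ∃ M, m' = M + 1 := ⟨m' - 1, by omega⟩
    have hMM : M + 1 - 1 = M := by omega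
    rw [hMM, vand (f - 1) M (n - 1 - f)]
    congr 1 <;> omega
  · intro d₁ _ d₂ _ hne
    show Disjoint (Q d₁) (Q d₂)
    rw [Finset.disjoint_left]
    intro S h1 h2
    simp only [hQ, Finset.mem_filter] at h1 h2
    exact hne (rank_inj h1.2.1 h2.2.1 (by rw [h1.2.2.2, h2.2.2.2]))

end MotzkinAux
namespace MotzkinAux

variable {m n k : ℕ}

/-- transport of a 2-Motzkin path to one whose U/D positions form `S` -/
def transport (S T : Finset (Fin m)) (hS : S.card = n) (hT : T.card = n)
    (x : Motzkin2 m) (hxT : UDpos x.1 = T) : Motzkin2 m :=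
  ⟨fun p => x.1 (gmap S T hS hT p), isMotzkin2_gmap x.1 S T hS hT hxT x.2⟩

lemma UDpos_transport (S T : Finset (Fin m)) (hS : S.card = n) (hT : T.card = n)
    (x : Motzkin2 m) (hxT : UDpos x.1 = T) :
    UDpos (transport S T hS hT x hxT).1 = S :=
  UDpos_gmap x.1 S T hS hT hxT

lemma transport_transport (S T : Finset (Fin m)) (hS : S.card = n) (hT : T.card = n)
    (x : Motzkin2 m) (hxT : UDpos x.1 = T)
    (h2 : UDpos (transport S T hS hT x hxT).1 = S) :
    transport T S hT hS (transport S T hS hT x hxT) h2 = x := by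
  apply Subtype.ext
  funext p
  show x.1 (gmap S T hS hT (gmap T S hT hS p)) = x.1 p
  rw [gmap_gmap T S hT hS p]

lemma symCount_transport (S T : Finset (Fin m)) (hS : S.card = n) (hT : T.card = n)
    (x : Motzkin2 m) (hxT : UDpos x.1 = T) (a : MSym) :
    symCount (transport S T hS hT x hxT).1 a = symCount x.1 a :=
  symCount_comp x.1 (gmap_bijective S T hS hT) a

lemma energy_transport (α β : ℝ) (S T : Finset (Fin m)) (hS : S.card = n) (hT : T.card = n)
    (x : Motzkin2 m) (hxT : UDpos x.1 = T) :
    energy α β (transport S T hS hT x hxT).1 = energy α β x.1 :=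
  energy_comp α β x.1 (gmap_bijective S T hS hT)

lemma transport_mem_Sset (S T : Finset (Fin m)) (hS : S.card = n) (hT : T.card = n)
    (x : Motzkin2 m) (hxT : UDpos x.1 = T) (hmem : x ∈ Sset m k) :
    transport S T hS hT x hxT ∈ Sset m k := by
  rw [Sset, Finset.mem_filter] at hmem ⊢
  refine ⟨Finset.mem_univ _, ?_⟩
  rw [symCount_transport]
  exact hmem.2

lemma Dfil_nonempty_of_mem (hk1 : 1 ≤ k) (x : Motzkin2 m) (hmem : x ∈ Sset m k) :
    (Dfil x.1).Nonempty := by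
  apply Dfil_nonempty hk1
  rw [← x.2.2]
  rw [Sset, Finset.mem_filter] at hmem
  exact hmem.2

lemma fNat_transport (S T : Finset (Fin m)) (hS : S.card = n) (hT : T.card = n)
    (x : Motzkin2 m) (hxT : UDpos x.1 = T) (hk1 : 1 ≤ k) (hmem : x ∈ Sset m k) :
    fNat (transport S T hS hT x hxT).1 = fNat x.1 :=
  fNat_gmap x.1 S T hS hT hxT (Dfil_nonempty_of_mem hk1 x hmem)

lemma card_S0 (m n : ℕ) (hnm : n ≤ m) :
    ((Finset.univ : Finset (Fin m)).filter fun p : Fin m => (p : ℕ) < n).card = n := by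
  have himg : (Finset.univ : Finset (Fin m)).filter (fun p : Fin m => (p : ℕ) < n)
      = (Finset.univ : Finset (Fin n)).image (Fin.castLE hnm) := by
    ext p
    simp only [Finset.mem_filter, Finset.mem_image, Finset.mem_univ, true_and]
    constructor
    · intro h
      exact ⟨⟨(p : ℕ), h⟩, rfl⟩
    · rintro ⟨q, rfl⟩
      exact q.2
  rw [himg, Finset.card_image_of_injective _ (Fin.castLE_injective hnm), Finset.card_univ,
    Fintype.card_fin]

end MotzkinAux
open MotzkinAux in
/-- For all real `α, β`, all `m ≥ 2` and all
`1 ≤ k ≤ ⌊m/2⌋`, with `A_k ⊆ S_k` the set of paths whose first `D` appears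
immediately after a `U`, `Σ_{x ∈ A_k} e^{-E(x)} = (2k/m)·Σ_{x ∈ S_k} e^{-E(x)}`. -/
theorem motzkin_Ak_weight (α β : ℝ) (m k : ℕ) (hm : 2 ≤ m) (hk1 : 1 ≤ k)
    (hk : k ≤ m / 2) :
    ∑ x ∈ (Sset m k).filter (fun x => firstDAfterU x.1),
        Real.exp (-(energy α β x.1)) =
      (2 * (k : ℝ) / (m : ℝ)) * ∑ x ∈ Sset m k, Real.exp (-(energy α β x.1)) := by
  classical
  have hnm : 2 * k ≤ m := by omega
  set n := 2 * k with hn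
  have hn2 : 2 ≤ n := by omega
  set S₀ : Finset (Fin m) := Finset.univ.filter (fun p : Fin m => (p : ℕ) < n) with hS₀def
  have hS₀ : S₀.card = n := card_S0 m n hnm
  set F : Motzkin2 m → ℝ := fun x => Real.exp (-(energy α β x.1)) with hF
  have hDcount : ∀ x : Motzkin2 m, x ∈ Sset m k → symCount x.1 MSym.D = k := by
    intro x hx
    rw [Sset, Finset.mem_filter] at hx
    rw [← x.2.2]
    exact hx.2
  have hUDcard : ∀ x : Motzkin2 m, x ∈ Sset m k → (UDpos x.1).card = n := by
    intro x hx
    have h2 := hDcount x hx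
    rw [Sset, Finset.mem_filter] at hx
    rw [card_UDpos, h2, hx.2]
    omega
  have hmapsto : ∀ x : Motzkin2 m, x ∈ Sset m k →
      UDpos x.1 ∈ Finset.powersetCard n (Finset.univ : Finset (Fin m)) := by
    intro x hx
    rw [Finset.mem_powersetCard_univ]
    exact hUDcard x hx
  set B := ∑ x ∈ (Sset m k).filter (fun x => UDpos x.1 = S₀), F x with hB
  -- plain fiber sums
  have hfiber : ∀ S ∈ Finset.powersetCard n (Finset.univ : Finset (Fin m)),
      ∑ x ∈ (Sset m k).filter (fun x => UDpos x.1 = S), F x = B := by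
    intro S hSmem
    have hSc : S.card = n := Finset.mem_powersetCard_univ.mp hSmem
    rw [hB]
    refine Finset.sum_bij'
      (i := fun x hx => transport S₀ S hS₀ hSc x (Finset.mem_filter.mp hx).2)
      (j := fun y hy => transport S S₀ hSc hS₀ y (Finset.mem_filter.mp hy).2)
      ?_ ?_ ?_ ?_ ?_
    · intro x hx
      rw [Finset.mem_filter]
      exact ⟨transport_mem_Sset _ _ _ _ _ _ (Finset.mem_filter.mp hx).1,
        UDpos_transport _ _ _ _ _ _⟩
    · intro y hy
      rw [Finset.mem_filter]
      exact ⟨transport_mem_Sset _ _ _ _ _ _ (Finset.mem_filter.mp hy).1,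
        UDpos_transport _ _ _ _ _ _⟩
    · intro x hx
      exact transport_transport _ _ _ _ _ _ _
    · intro y hy
      exact transport_transport _ _ _ _ _ _ _
    · intro x hx
      simp only [hF]
      rw [energy_transport]
  -- A-side fiber sums
  have hfiberA : ∀ S ∈ Finset.powersetCard n (Finset.univ : Finset (Fin m)),
      ∑ x ∈ ((Sset m k).filter (fun x => firstDAfterU x.1)).filter
          (fun x => UDpos x.1 = S), F x
      = ∑ y ∈ (Sset m k).filter (fun x => UDpos x.1 = S₀),
          if (∃ d : Fin m, d ∈ S ∧ (∃ p : Fin m, p ∈ S ∧ (p : ℕ) + 1 = (d : ℕ)) ∧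
            (S.filter (· < d)).card = fNat y.1) then F y else 0 := by
    intro S hSmem
    have hSc : S.card = n := Finset.mem_powersetCard_univ.mp hSmem
    rw [← Finset.sum_filter]
    refine Finset.sum_bij'
      (i := fun x hx => transport S₀ S hS₀ hSc x (Finset.mem_filter.mp hx).2)
      (j := fun y hy => transport S S₀ hSc hS₀ y
        (Finset.mem_filter.mp (Finset.mem_filter.mp hy).1).2)
      ?_ ?_ ?_ ?_ ?_
    · -- hi
      intro x hx
      have hx1 := Finset.mem_filter.mp hx
      have hx2 := Finset.mem_filter.mp hx1.1
      have hxS : UDpos x.1 = S := hx1.2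
      have hxSset : x ∈ Sset m k := hx2.1
      have hxA : firstDAfterU x.1 := hx2.2
      rw [Finset.mem_filter, Finset.mem_filter]
      refine ⟨⟨transport_mem_Sset _ _ _ _ _ _ hxSset, UDpos_transport _ _ _ _ _ _⟩, ?_⟩
      have hne : (Dfil x.1).Nonempty := Dfil_nonempty_of_mem hk1 x hxSset
      have hcond := (firstDAfterU_iff x.1 S hxS hne).mp hxA
      rwa [← fNat_transport S₀ S hS₀ hSc x hxS hk1 hxSset] at hcond
    · -- hj
      intro y hy
      have hy1 := Finset.mem_filter.mp hy
      have hy2 := Finset.mem_filter.mp hy1.1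
      have hyS₀ : UDpos y.1 = S₀ := hy2.2
      have hySset : y ∈ Sset m k := hy2.1
      rw [Finset.mem_filter, Finset.mem_filter]
      have hmem' : transport S S₀ hSc hS₀ y hyS₀ ∈ Sset m k :=
        transport_mem_Sset _ _ _ _ _ _ hySset
      refine ⟨⟨hmem', ?_⟩, UDpos_transport _ _ _ _ _ _⟩
      have hne' : (Dfil (transport S S₀ hSc hS₀ y hyS₀).1).Nonempty :=
        Dfil_nonempty_of_mem hk1 _ hmem'
      rw [firstDAfterU_iff (transport S S₀ hSc hS₀ y hyS₀).1 S
        (UDpos_transport _ _ _ _ _ _) hne']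
      rw [fNat_transport S S₀ hSc hS₀ y hyS₀ hk1 hySset]
      exact hy1.2
    · intro x hx
      exact transport_transport _ _ _ _ _ _ _
    · intro y hy
      exact transport_transport _ _ _ _ _ _ _
    · intro x hx
      simp only [hF]
      rw [energy_transport]
  -- assembling the A-side
  have hA : ∑ x ∈ (Sset m k).filter (fun x => firstDAfterU x.1), F x
      = ((m - 1).choose (n - 1) : ℝ) * B := by
    rw [← Finset.sum_fiberwise_of_maps_to
      (t := Finset.powersetCard n (Finset.univ : Finset (Fin m)))
      (g := fun x : Motzkin2 m => UDpos x.1)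
      (fun x hx => hmapsto x (Finset.mem_of_mem_filter x hx)) F]
    rw [Finset.sum_congr rfl hfiberA]
    rw [Finset.sum_comm]
    rw [hB, Finset.mul_sum]
    apply Finset.sum_congr rfl
    intro y hy
    have hySset : y ∈ Sset m k := (Finset.mem_filter.mp hy).1
    have hyS₀ : UDpos y.1 = S₀ := (Finset.mem_filter.mp hy).2
    have hne : (Dfil y.1).Nonempty := Dfil_nonempty_of_mem hk1 y hySset
    have hf1 : 1 ≤ fNat y.1 := fNat_pos y.1 S₀ hS₀ hyS₀ hne y.2.1
    have hfn : fNat y.1 < n := fNat_lt y.1 S₀ hS₀ hyS₀ hne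
    rw [← Finset.sum_filter, Finset.sum_const,
      countAdj m n (fNat y.1) hm hf1 hfn, nsmul_eq_mul]
  -- assembling the S-side
  have hStot : ∑ x ∈ Sset m k, F x = (m.choose n : ℝ) * B := by
    rw [← Finset.sum_fiberwise_of_maps_to
      (t := Finset.powersetCard n (Finset.univ : Finset (Fin m)))
      (g := fun x : Motzkin2 m => UDpos x.1) hmapsto F]
    rw [Finset.sum_congr rfl hfiber, Finset.sum_const, nsmul_eq_mul]
    have hc : (Finset.powersetCard n (Finset.univ : Finset (Fin m))).card = m.choose n := by
      rw [Finset.card_powersetCard, Finset.card_univ, Fintype.card_fin]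
    rw [hc]
  -- final arithmetic
  rw [hA, hStot]
  have hNat : m * Nat.choose (m - 1) (n - 1) = Nat.choose m n * n := by
    have h := Nat.add_one_mul_choose_eq (m - 1) (n - 1)
    rw [show m - 1 + 1 = m by omega, show n - 1 + 1 = n by omega] at h
    exact h
  have hcast : (m : ℝ) * ((m - 1).choose (n - 1) : ℝ) = (m.choose n : ℝ) * (n : ℝ) := by
    exact_mod_cast congrArg (Nat.cast : ℕ → ℝ) hNat
  have hnr : (n : ℝ) = 2 * (k : ℝ) := by rw [hn]; push_cast; ring
  have hm0 : (m : ℝ) ≠ 0 := Nat.cast_ne_zero.mpr (by omega)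
  rw [← hnr]
  field_simp
  linear_combination B * hcast
end

section
/- For all real α and β, all m ≥ 2, and all 0 ≤ k ≤ ⌊m/2⌋ − 1, let S_k = {x ∈ 𝔐²_m : |x|_U = k} and let B_k be the subset of S_k consisting of those 2-Motzkin paths in which a pair of adjacent H symbols occurs before all other H or I symbols (i.e., the first two symbols of x that belong to {H, I} are both H and occupy consecutive positions in x). Then Σ_{x ∈ B_k} e^{−E(x)} = ((m − 2k)/m) · (e^{−α}/(e^{−α} + e^{−β}))² · Σ_{x ∈ S_k} e^{−E(x)}. -/
open Finset

/-- A pair of adjacent `H` symbols occurs in `x` before all other `H` or `I`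
symbols: the first two symbols of `x` belonging to `{H, I}` are both `H` and
occupy consecutive positions. -/
def firstHIPairHH {m : ℕ} (x : Fin m → MSym) : Prop :=
  ∃ p : Fin m × Fin m, (p.2 : ℕ) = (p.1 : ℕ) + 1 ∧
    x p.1 = MSym.H ∧ x p.2 = MSym.H ∧
    ∀ i : Fin m, (x i = MSym.H ∨ x i = MSym.I) → i = p.1 ∨ p.2 ≤ i

instance {m : ℕ} : DecidablePred (firstHIPairHH (m := m)) := fun _ => by
  unfold firstHIPairHH; infer_instance

namespace MBW
open MSym

/-- per-symbol energy -/
noncomputable def symE (α β : ℝ) : MSym → ℝ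
  | .U => α | .H => α | .I => β | .D => 0

noncomputable def gW (α β : ℝ) (a : MSym) : ℝ := Real.exp (-(symE α β a))

lemma gW_pos (α β : ℝ) (a : MSym) : 0 < gW α β a := Real.exp_pos _

lemma energy_eq (α β : ℝ) {m : ℕ} (x : Fin m → MSym) :
    energy α β x = α + ∑ i, symE α β (x i) := by
  have h : ∀ a : MSym, symE α β a =
      α * (if a = U then 1 else 0) + α * (if a = H then 1 else 0)
        + β * (if a = I then 1 else 0) := by
    intro a; cases a <;> simp [symE]
  simp only [h, Finset.sum_add_distrib, ← Finset.mul_sum, Finset.sum_boole]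
  simp only [energy, symCount]
  ring

lemma exp_energy (α β : ℝ) {m : ℕ} (x : Fin m → MSym) :
    Real.exp (-(energy α β x)) = Real.exp (-α) * ∏ i, gW α β (x i) := by
  rw [energy_eq, neg_add, Real.exp_add, ← Finset.sum_neg_distrib, Real.exp_sum]
  rfl

end MBW
namespace MBW
open MSym

variable {m k : ℕ}

/-- shape: recolor I as H -/
def shape (x : Fin m → MSym) : Fin m → MSym := fun i => if x i = I then H else x i

lemma shape_eq_U {x : Fin m → MSym} (i : Fin m) : shape x i = U ↔ x i = U := by
  unfold shape; cases h : x i <;> simp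

lemma shape_eq_D {x : Fin m → MSym} (i : Fin m) : shape x i = D ↔ x i = D := by
  unfold shape; cases h : x i <;> simp

lemma shape_eq_H {x : Fin m → MSym} (i : Fin m) : shape x i = H ↔ (x i = H ∨ x i = I) := by
  unfold shape; cases h : x i <;> simp

lemma shape_ne_I {x : Fin m → MSym} (i : Fin m) : shape x i ≠ I := by
  unfold shape; cases h : x i <;> simp

lemma symCount_shape_U (x : Fin m → MSym) : symCount (shape x) U = symCount x U := by
  unfold symCount; congr 1; apply Finset.filter_congr; intro i _; simp [shape_eq_U]

lemma symCount_shape_D (x : Fin m → MSym) : symCount (shape x) D = symCount x D := by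
  unfold symCount; congr 1; apply Finset.filter_congr; intro i _; simp [shape_eq_D]

lemma symCountPrefix_shape_U (x : Fin m → MSym) (j : Fin m) :
    symCountPrefix (shape x) U j = symCountPrefix x U j := by
  unfold symCountPrefix; congr 1; apply Finset.filter_congr; intro i _
  simp [shape_eq_U]

lemma symCountPrefix_shape_D (x : Fin m → MSym) (j : Fin m) :
    symCountPrefix (shape x) D j = symCountPrefix x D j := by
  unfold symCountPrefix; congr 1; apply Finset.filter_congr; intro i _
  simp [shape_eq_D]

lemma isMotzkin2_shape (x : Fin m → MSym) : IsMotzkin2 (shape x) ↔ IsMotzkin2 x := by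
  unfold IsMotzkin2
  simp only [symCount_shape_U, symCount_shape_D, symCountPrefix_shape_U, symCountPrefix_shape_D]

end MBW
namespace MBW
open MSym

variable {m k : ℕ}

/-- the paths as plain functions -/
def SkF (m k : ℕ) : Finset (Fin m → MSym) :=
  Finset.univ.filter (fun x => IsMotzkin2 x ∧ symCount x U = k)

def Shapes (m k : ℕ) : Finset (Fin m → MSym) :=
  Finset.univ.filter (fun σ => IsMotzkin2 σ ∧ symCount σ U = k ∧ ∀ i, σ i ≠ I)

lemma sum_Sset (α β : ℝ) (m k : ℕ) (Q : (Fin m → MSym) → Prop) [DecidablePred Q] :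
    ∑ x ∈ (Sset m k).filter (fun x => Q x.1), Real.exp (-(energy α β x.1)) =
      ∑ x ∈ (SkF m k).filter Q, Real.exp (-(energy α β x)) := by
  apply Finset.sum_bij (fun (x : Motzkin2 m) _ => x.1)
  · intro x hx
    simp only [Sset, Finset.mem_filter, Finset.mem_univ, true_and] at hx
    simp only [SkF, Finset.mem_filter, Finset.mem_univ, true_and]
    exact ⟨⟨x.2, hx.1⟩, hx.2⟩
  · intro x hx y hy h; exact Subtype.ext h
  · intro y hy
    simp only [SkF, Finset.mem_filter, Finset.mem_univ, true_and] at hy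
    refine ⟨⟨y, hy.1.1⟩, ?_, rfl⟩
    simp only [Sset, Finset.mem_filter, Finset.mem_univ, true_and]
    exact ⟨hy.1.2, hy.2⟩
  · intro x hx; rfl

lemma sum_Sset' (α β : ℝ) (m k : ℕ) :
    ∑ x ∈ Sset m k, Real.exp (-(energy α β x.1)) =
      ∑ x ∈ SkF m k, Real.exp (-(energy α β x)) := by
  have := sum_Sset α β m k (fun _ => True)
  simpa using this

lemma shape_mem_Shapes {x : Fin m → MSym} (hx : x ∈ SkF m k) : shape x ∈ Shapes m k := by
  simp only [SkF, Finset.mem_filter, Finset.mem_univ, true_and] at hx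
  simp only [Shapes, Finset.mem_filter, Finset.mem_univ, true_and]
  exact ⟨(isMotzkin2_shape x).2 hx.1, by rw [symCount_shape_U]; exact hx.2,
    fun i => shape_ne_I i⟩

end MBW
namespace MBW
open MSym

variable {m k : ℕ}

/-- allowed symbols at position `i` for the fiber over shape `σ` -/
def tt (σ : Fin m → MSym) (i : Fin m) : Finset MSym :=
  if σ i = H then {H, I} else {σ i}

lemma mem_tt_iff {σ x : Fin m → MSym} (i : Fin m) (hI : σ i ≠ I) :
    x i ∈ tt σ i ↔ shape x i = σ i := by
  unfold tt shape
  cases hx : x i <;> cases hσ : σ i <;> simp_all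

lemma fiber_eq {σ : Fin m → MSym} (hσ : σ ∈ Shapes m k) :
    (SkF m k).filter (fun x => shape x = σ) = Fintype.piFinset (tt σ) := by
  simp only [Shapes, Finset.mem_filter, Finset.mem_univ, true_and] at hσ
  obtain ⟨hM, hU, hI⟩ := hσ
  ext x
  simp only [Finset.mem_filter, Fintype.mem_piFinset, SkF, Finset.mem_univ, true_and]
  constructor
  · rintro ⟨⟨hM', hU'⟩, hsh⟩ i
    rw [mem_tt_iff i (hI i), hsh]
  · intro h
    have hsh : shape x = σ := funext fun i => (mem_tt_iff i (hI i)).1 (h i)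
    refine ⟨⟨?_, ?_⟩, hsh⟩
    · rw [← isMotzkin2_shape, hsh]; exact hM
    · rw [← symCount_shape_U, hsh]; exact hU

lemma fiber_sum (α β : ℝ) {σ : Fin m → MSym} (hσ : σ ∈ Shapes m k) :
    ∑ x ∈ (SkF m k).filter (fun x => shape x = σ), ∏ i, gW α β (x i)
      = ∏ i, (if σ i = H then Real.exp (-α) + Real.exp (-β) else gW α β (σ i)) := by
  rw [fiber_eq hσ, ← Finset.prod_univ_sum]
  apply Finset.prod_congr rfl
  intro i _
  unfold tt
  by_cases h : σ i = H <;> simp [h, gW, symE]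

lemma prod_tt_eval (α β : ℝ) {σ : Fin m → MSym} (hσ : σ ∈ Shapes m k) :
    ∏ i, (if σ i = H then Real.exp (-α) + Real.exp (-β) else gW α β (σ i))
      = (Real.exp (-α) + Real.exp (-β)) ^ (symCount σ H) * Real.exp (-α) ^ k := by
  simp only [Shapes, Finset.mem_filter, Finset.mem_univ, true_and] at hσ
  obtain ⟨hM, hU, hI⟩ := hσ
  rw [Finset.prod_ite]
  congr 1
  · rw [Finset.prod_const, symCount]
  · have : ∀ i ∈ Finset.univ.filter (fun i => ¬ σ i = H),
        gW α β (σ i) = if σ i = U then Real.exp (-α) else 1 := by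
      intro i hi
      simp only [Finset.mem_filter] at hi
      have := hI i
      cases h : σ i <;> simp_all [gW, symE]
    rw [Finset.prod_congr rfl this, Finset.prod_ite, Finset.prod_const, Finset.prod_const,
      one_pow, mul_one, Finset.filter_filter]
    congr 2
    rw [← hU, symCount]
    congr 1
    apply Finset.filter_congr
    intro i _
    constructor
    · rintro ⟨-, h⟩; exact h
    · intro h; exact ⟨by simp [h], h⟩

end MBW
namespace MBW
open MSym

variable {m k : ℕ}

lemma witness_unique {y z : Fin m → MSym}
    (hyz : ∀ i, (y i = H ∨ y i = I) ↔ (z i = H ∨ z i = I)) {p q : Fin m × Fin m}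
    (hp2 : (p.2 : ℕ) = (p.1 : ℕ) + 1) (hpH : y p.1 = H)
    (hpall : ∀ i, (y i = H ∨ y i = I) → i = p.1 ∨ p.2 ≤ i)
    (hq2 : (q.2 : ℕ) = (q.1 : ℕ) + 1) (hqH : z q.1 = H)
    (hqall : ∀ i, (z i = H ∨ z i = I) → i = q.1 ∨ q.2 ≤ i) : p = q := by
  have h1 : p.1 = q.1 ∨ q.2 ≤ p.1 := hqall p.1 ((hyz p.1).1 (Or.inl hpH))
  have h2 : q.1 = p.1 ∨ p.2 ≤ q.1 := hpall q.1 ((hyz q.1).2 (Or.inl hqH))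
  have h11 : p.1 = q.1 := by
    rcases h1 with h1 | h1
    · exact h1
    rcases h2 with h2 | h2
    · exact h2.symm
    exfalso
    have a1 : (q.2 : ℕ) ≤ (p.1 : ℕ) := h1
    have a2 : (p.2 : ℕ) ≤ (q.1 : ℕ) := h2
    omega
  have h22 : p.2 = q.2 := by
    apply Fin.ext
    rw [hp2, hq2, h11]
  exact Prod.ext h11 h22

lemma firstHI_of_shape {x σ : Fin m → MSym} (hsh : shape x = σ) (hB : firstHIPairHH x) :
    firstHIPairHH σ := by
  obtain ⟨p, hp2, hH1, hH2, hall⟩ := hB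
  refine ⟨p, hp2, ?_, ?_, ?_⟩
  · rw [← hsh]; exact (shape_eq_H p.1).2 (Or.inl hH1)
  · rw [← hsh]; exact (shape_eq_H p.2).2 (Or.inl hH2)
  · intro i hi
    apply hall i
    rw [← hsh] at hi
    rcases hi with hi | hi
    · exact (shape_eq_H i).1 hi
    · exact absurd hi (shape_ne_I i)

/-- HI-equivalence between `x` and its shape -/
lemma hi_shape {x σ : Fin m → MSym} (hsh : shape x = σ) (i : Fin m) :
    (σ i = H ∨ σ i = I) ↔ (x i = H ∨ x i = I) := by
  rw [← hsh]
  constructor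
  · rintro (h | h)
    · exact (shape_eq_H i).1 h
    · exact absurd h (shape_ne_I i)
  · intro h; exact Or.inl ((shape_eq_H i).2 h)

def tt' (σ : Fin m → MSym) (p : Fin m × Fin m) (i : Fin m) : Finset MSym :=
  if i = p.1 ∨ i = p.2 then {H} else tt σ i

lemma Bfiber_eq {σ : Fin m → MSym} (hσ : σ ∈ Shapes m k) {p : Fin m × Fin m}
    (hp2 : (p.2 : ℕ) = (p.1 : ℕ) + 1) (hpH1 : σ p.1 = H) (hpH2 : σ p.2 = H)
    (hpall : ∀ i, (σ i = H ∨ σ i = I) → i = p.1 ∨ p.2 ≤ i) :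
    (SkF m k).filter (fun x => shape x = σ ∧ firstHIPairHH x)
      = Fintype.piFinset (tt' σ p) := by
  have hσ' := hσ
  simp only [Shapes, Finset.mem_filter, Finset.mem_univ, true_and] at hσ'
  obtain ⟨hM, hU, hI⟩ := hσ'
  ext x
  simp only [Finset.mem_filter, Fintype.mem_piFinset, SkF, Finset.mem_univ, true_and]
  constructor
  · rintro ⟨⟨hM', hU'⟩, hsh, hB⟩ i
    obtain ⟨q, hq2, hqH1, hqH2, hqall⟩ := hB
    have hpq : p = q := witness_unique (hi_shape hsh) hp2 hpH1 hpall hq2 hqH1 hqall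
    unfold tt'
    by_cases h1 : i = p.1 ∨ i = p.2
    · rw [if_pos h1]
      rcases h1 with h1 | h1 <;> subst h1 <;> simp [hpq, hqH1, hqH2]
    · rw [if_neg h1, mem_tt_iff i (hI i), hsh]
  · intro h
    have hsh : shape x = σ := by
      funext i
      have hi := h i
      unfold tt' at hi
      by_cases h1 : i = p.1 ∨ i = p.2
      · rw [if_pos h1] at hi
        simp only [Finset.mem_singleton] at hi
        rcases h1 with h1 | h1 <;> subst h1 <;>
          simp [shape, hi, hpH1, hpH2]
      · rw [if_neg h1] at hi
        exact (mem_tt_iff i (hI i)).1 hi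
    refine ⟨⟨?_, ?_⟩, hsh, ?_⟩
    · rw [← isMotzkin2_shape, hsh]; exact hM
    · rw [← symCount_shape_U, hsh]; exact hU
    · refine ⟨p, hp2, ?_, ?_, ?_⟩
      · have := h p.1; unfold tt' at this; simp at this; exact this
      · have := h p.2; unfold tt' at this; simp at this; exact this
      · intro i hi
        exact hpall i ((hi_shape hsh i).2 hi)

lemma Bfiber_sum (α β : ℝ) {σ : Fin m → MSym} (hσ : σ ∈ Shapes m k) {p : Fin m × Fin m}
    (hp2 : (p.2 : ℕ) = (p.1 : ℕ) + 1) (hpH1 : σ p.1 = H) (hpH2 : σ p.2 = H)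
    (hpall : ∀ i, (σ i = H ∨ σ i = I) → i = p.1 ∨ p.2 ≤ i) :
    (∑ x ∈ (SkF m k).filter (fun x => shape x = σ ∧ firstHIPairHH x),
        ∏ i, gW α β (x i)) * (Real.exp (-α) + Real.exp (-β)) ^ 2
      = (Real.exp (-α) + Real.exp (-β)) ^ (symCount σ H) * Real.exp (-α) ^ k
          * Real.exp (-α) ^ 2 := by
  set aa := Real.exp (-α)
  set bb := Real.exp (-β)
  have hne : p.1 ≠ p.2 := by
    intro h; have : (p.1 : ℕ) = (p.2 : ℕ) := by rw [h]
    omega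
  have hmem2 : p.2 ∈ Finset.univ.erase p.1 := by
    simp [Finset.mem_erase, hne, Ne.symm hne]
  set f : Fin m → ℝ := fun i => if σ i = H then aa + bb else gW α β (σ i) with hf
  set R : ℝ := ∏ i ∈ (Finset.univ.erase p.1).erase p.2, f i with hR
  have hval : ∀ i, (∑ a ∈ tt' σ p i, gW α β a)
      = if i = p.1 ∨ i = p.2 then aa else f i := by
    intro i
    unfold tt' tt
    by_cases h1 : i = p.1 ∨ i = p.2
    · simp [h1, gW, symE, aa, f]
    · by_cases h2 : σ i = H <;> simp [h1, h2, gW, symE, aa, bb, f]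
  have hrest : ∏ i ∈ (Finset.univ.erase p.1).erase p.2,
      (if i = p.1 ∨ i = p.2 then aa else f i) = R := by
    apply Finset.prod_congr rfl
    intro i hi
    simp only [Finset.mem_erase] at hi
    rw [if_neg (by tauto)]
  have claim1 : ∏ i, (∑ a ∈ tt' σ p i, gW α β a) = aa * (aa * R) := by
    rw [Finset.prod_congr rfl (fun i _ => hval i),
      ← Finset.mul_prod_erase Finset.univ _ (Finset.mem_univ p.1),
      ← Finset.mul_prod_erase _ _ hmem2]
    simp only [eq_self_iff_true, true_or, or_true, if_true]
    rw [hrest]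
  have claim2 : ∏ i, f i = (aa + bb) * ((aa + bb) * R) := by
    rw [← Finset.mul_prod_erase Finset.univ f (Finset.mem_univ p.1),
      ← Finset.mul_prod_erase _ f hmem2, ← hR]
    have e1 : f p.1 = aa + bb := by rw [hf]; simp [hpH1]
    have e2 : f p.2 = aa + bb := by rw [hf]; simp [hpH2]
    rw [e1, e2]
  rw [Bfiber_eq hσ hp2 hpH1 hpH2 hpall, ← Finset.prod_univ_sum, claim1,
    ← prod_tt_eval α β hσ]
  have : (∏ i, (if σ i = H then aa + bb else gW α β (σ i))) = ∏ i, f i := rfl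
  rw [this, claim2]
  ring

end MBW
namespace MBW
open MSym

variable {m k : ℕ}

lemma symCount_total (x : Fin m → MSym) :
    symCount x U + symCount x H + symCount x I + symCount x D = m := by
  have h : ∀ i : Fin m, (1 : ℕ) =
      (if x i = U then 1 else 0) + (if x i = H then 1 else 0)
        + (if x i = I then 1 else 0) + (if x i = D then 1 else 0) := by
    intro i; cases hx : x i <;> simp
  have := Finset.sum_congr rfl (fun i (_ : i ∈ Finset.univ) => h i)
  simp only [Finset.sum_const, smul_eq_mul, mul_one, Finset.card_univ, Fintype.card_fin,
    Finset.sum_add_distrib, Finset.sum_boole, Nat.cast_id] at this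
  simpa [symCount] using this.symm

lemma symCount_I_eq_zero {x : Fin m → MSym} (h : ∀ i, x i ≠ I) : symCount x I = 0 := by
  unfold symCount
  rw [Finset.card_eq_zero, Finset.filter_false_of_mem]
  intro i _
  exact h i

lemma shapes_H {σ : Fin m → MSym} (hσ : σ ∈ Shapes m k) : symCount σ H = m - 2 * k := by
  simp only [Shapes, Finset.mem_filter, Finset.mem_univ, true_and] at hσ
  obtain ⟨hM, hU, hI⟩ := hσ
  have h1 := symCount_total σ
  have h2 := hM.2
  have h3 := symCount_I_eq_zero hI
  omega

lemma sum_SkF_eq (α β : ℝ) :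
    ∑ x ∈ SkF m k, ∏ i, gW α β (x i)
      = ((Shapes m k).card : ℝ) *
          ((Real.exp (-α) + Real.exp (-β)) ^ (m - 2 * k) * Real.exp (-α) ^ k) := by
  rw [← Finset.sum_fiberwise_of_maps_to (fun x hx => shape_mem_Shapes hx)
    (fun x => ∏ i, gW α β (x i))]
  rw [Finset.sum_congr rfl (fun σ hσ => by
    rw [fiber_sum α β hσ, prod_tt_eval α β hσ, shapes_H hσ])]
  rw [Finset.sum_const, nsmul_eq_mul]

lemma sum_SkFB_eq (α β : ℝ) :
    (∑ x ∈ (SkF m k).filter (fun x => firstHIPairHH x), ∏ i, gW α β (x i))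
        * (Real.exp (-α) + Real.exp (-β)) ^ 2
      = (((Shapes m k).filter (fun σ => firstHIPairHH σ)).card : ℝ) *
          ((Real.exp (-α) + Real.exp (-β)) ^ (m - 2 * k) * Real.exp (-α) ^ k
            * Real.exp (-α) ^ 2) := by
  rw [← Finset.sum_fiberwise_of_maps_to
    (fun x hx => shape_mem_Shapes (Finset.mem_of_mem_filter x hx))
    (fun x => ∏ i, gW α β (x i))]
  rw [Finset.sum_mul]
  have key : ∀ σ ∈ Shapes m k,
      (∑ x ∈ ((SkF m k).filter (fun x => firstHIPairHH x)).filter (fun x => shape x = σ),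
          ∏ i, gW α β (x i)) * (Real.exp (-α) + Real.exp (-β)) ^ 2
        = if firstHIPairHH σ then
            (Real.exp (-α) + Real.exp (-β)) ^ (m - 2 * k) * Real.exp (-α) ^ k
              * Real.exp (-α) ^ 2
          else 0 := by
    intro σ hσ
    have hfilt : ((SkF m k).filter (fun x => firstHIPairHH x)).filter (fun x => shape x = σ)
        = (SkF m k).filter (fun x => shape x = σ ∧ firstHIPairHH x) := by
      rw [Finset.filter_filter]
      apply Finset.filter_congr
      intro x _
      tauto
    rw [hfilt]
    by_cases hB : firstHIPairHH σ
    · rw [if_pos hB]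
      obtain ⟨p, hp2, hpH1, hpH2, hpall⟩ := hB
      rw [Bfiber_sum α β hσ hp2 hpH1 hpH2 hpall, shapes_H hσ]
    · rw [if_neg hB]
      have : (SkF m k).filter (fun x => shape x = σ ∧ firstHIPairHH x) = ∅ := by
        rw [Finset.filter_false_of_mem]
        rintro x _ ⟨hsh, hBx⟩
        exact hB (firstHI_of_shape hsh hBx)
      rw [this, Finset.sum_empty, zero_mul]
  rw [Finset.sum_congr rfl key, Finset.sum_ite, Finset.sum_const, Finset.sum_const,
    smul_zero, add_zero, nsmul_eq_mul]

end MBW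
namespace MBW
open MSym

variable {m k : ℕ}

/-- positions of H -/
def Hset (σ : Fin m → MSym) : Finset (Fin m) := Finset.univ.filter (fun i => σ i = H)

/-- Dyck words of length 2k -/
def DyckF (k : ℕ) : Finset (Fin (2 * k) → MSym) :=
  Finset.univ.filter (fun w => IsMotzkin2 w ∧ ∀ l, w l = U ∨ w l = D)

section transport

variable {T : Finset (Fin m)} (hTc : Tᶜ.card = 2 * k)

/-- compatibility of a shape `σ` (H exactly on `T`) with a Dyck word `w` along `Tᶜ` -/
def Compat (hTc : Tᶜ.card = 2 * k) (σ : Fin m → MSym) (w : Fin (2 * k) → MSym) : Prop :=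
  (∀ i ∈ T, σ i = H) ∧ ∀ l, σ ((Tᶜ.orderIsoOfFin hTc l : Fin m)) = w l

lemma compat_count {σ : Fin m → MSym} {w : Fin (2 * k) → MSym}
    (hc : Compat hTc σ w) {a : MSym} (ha : a ≠ H) :
    symCount σ a = symCount w a := by
  unfold symCount
  apply (Finset.card_bij (fun l _ => ((Tᶜ.orderIsoOfFin hTc l : Fin m))) ?_ ?_ ?_).symm
  · intro l hl
    simp only [Finset.mem_filter, Finset.mem_univ, true_and] at hl ⊢
    rw [hc.2 l]; exact hl
  · intro l₁ h₁ l₂ h₂ h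
    have := Subtype.ext h (p := fun x => x ∈ Tᶜ)
    exact (Tᶜ.orderIsoOfFin hTc).injective this
  · intro i hi
    simp only [Finset.mem_filter, Finset.mem_univ, true_and] at hi
    have hic : i ∈ Tᶜ := by
      rw [Finset.mem_compl]
      intro hiT
      rw [hc.1 i hiT] at hi
      exact ha hi.symm
    refine ⟨(Tᶜ.orderIsoOfFin hTc).symm ⟨i, hic⟩, ?_, ?_⟩
    · simp only [Finset.mem_filter, Finset.mem_univ, true_and]
      rw [← hc.2, OrderIso.apply_symm_apply]
      exact hi
    · simp

lemma compat_prefix {σ : Fin m → MSym} {w : Fin (2 * k) → MSym}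
    (hc : Compat hTc σ w) {a : MSym} (ha : a ≠ H) (j : Fin m) :
    symCountPrefix σ a j =
      (Finset.univ.filter (fun l => ((Tᶜ.orderIsoOfFin hTc l : Fin m)) ≤ j ∧ w l = a)).card := by
  unfold symCountPrefix
  apply (Finset.card_bij (fun l _ => ((Tᶜ.orderIsoOfFin hTc l : Fin m))) ?_ ?_ ?_).symm
  · intro l hl
    simp only [Finset.mem_filter, Finset.mem_univ, true_and] at hl ⊢
    rw [hc.2 l]; exact hl
  · intro l₁ h₁ l₂ h₂ h
    have := Subtype.ext h (p := fun x => x ∈ Tᶜ)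
    exact (Tᶜ.orderIsoOfFin hTc).injective this
  · intro i hi
    simp only [Finset.mem_filter, Finset.mem_univ, true_and] at hi
    have hic : i ∈ Tᶜ := by
      rw [Finset.mem_compl]
      intro hiT
      rw [hc.1 i hiT] at hi
      exact ha hi.2.symm
    refine ⟨(Tᶜ.orderIsoOfFin hTc).symm ⟨i, hic⟩, ?_, ?_⟩
    · simp only [Finset.mem_filter, Finset.mem_univ, true_and]
      rw [← hc.2, OrderIso.apply_symm_apply]
      exact hi
    · simp

lemma compat_motzkin {σ : Fin m → MSym} {w : Fin (2 * k) → MSym}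
    (hc : Compat hTc σ w) : IsMotzkin2 σ ↔ IsMotzkin2 w := by
  set e := Tᶜ.orderIsoOfFin hTc with he
  constructor
  · rintro ⟨hpre, hcnt⟩
    refine ⟨?_, ?_⟩
    · intro t
      have hD := compat_prefix hTc hc (a := D) (by simp) ((e t : Fin m))
      have hU := compat_prefix hTc hc (a := U) (by simp) ((e t : Fin m))
      have hset : ∀ a : MSym,
          Finset.univ.filter (fun l => ((e l : Fin m)) ≤ (e t : Fin m) ∧ w l = a)
            = Finset.univ.filter (fun l => l ≤ t ∧ w l = a) := by
        intro a
        apply Finset.filter_congr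
        intro l _
        have : ((e l : Fin m)) ≤ ((e t : Fin m)) ↔ l ≤ t := by
          rw [Subtype.coe_le_coe, OrderIso.le_iff_le]
        rw [this]
      rw [hset] at hD hU
      show symCountPrefix w D t ≤ symCountPrefix w U t
      unfold symCountPrefix
      rw [← hD, ← hU]
      exact hpre _
    · rw [← compat_count hTc hc (by simp), ← compat_count hTc hc (by simp)]
      exact hcnt
  · rintro ⟨hpre, hcnt⟩
    refine ⟨?_, ?_⟩
    · intro j
      have hD := compat_prefix hTc hc (a := D) (by simp) j
      have hU := compat_prefix hTc hc (a := U) (by simp) j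
      show symCountPrefix σ D j ≤ symCountPrefix σ U j
      rw [hD, hU]
      by_cases hS : (Finset.univ.filter (fun l => ((e l : Fin m)) ≤ j)).Nonempty
      · set l' := (Finset.univ.filter (fun l => ((e l : Fin m)) ≤ j)).max' hS with hl'
        have hiff : ∀ l, ((e l : Fin m)) ≤ j ↔ l ≤ l' := by
          intro l
          constructor
          · intro h
            apply Finset.le_max'
            simp only [Finset.mem_filter, Finset.mem_univ, true_and]
            exact h
          · intro h
            have h1 : (e l : Fin m) ≤ (e l' : Fin m) := by
              rw [Subtype.coe_le_coe, OrderIso.le_iff_le]; exact h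
            have h2 : (e l' : Fin m) ≤ j := by
              have := (Finset.univ.filter (fun l => ((e l : Fin m)) ≤ j)).max'_mem hS
              simp only [Finset.mem_filter, Finset.mem_univ, true_and] at this
              exact this
            exact le_trans h1 h2
        have hset : ∀ a : MSym,
            Finset.univ.filter (fun l => ((e l : Fin m)) ≤ j ∧ w l = a)
              = Finset.univ.filter (fun l => l ≤ l' ∧ w l = a) := by
          intro a
          apply Finset.filter_congr
          intro l _
          rw [hiff l]
        rw [hset, hset]
        exact hpre l'
      · rw [Finset.not_nonempty_iff_eq_empty] at hS
        have hsub : ∀ a : MSym,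
            Finset.univ.filter (fun l => ((e l : Fin m)) ≤ j ∧ w l = a) = ∅ := by
          intro a
          rw [← Finset.subset_empty, ← hS]
          intro l hl
          simp only [Finset.mem_filter, Finset.mem_univ, true_and] at hl ⊢
          exact hl.1
        rw [hsub, hsub]
    · rw [compat_count hTc hc (a := U) (by simp), compat_count hTc hc (a := D) (by simp)]
      exact hcnt

end transport

end MBW
namespace MBW
open MSym

variable {m k : ℕ}

lemma symCount_eq_zero {x : Fin m → MSym} {a : MSym} (h : ∀ i, x i ≠ a) :
    symCount x a = 0 := by
  unfold symCount
  rw [Finset.card_eq_zero, Finset.filter_false_of_mem]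
  intro i _
  exact h i

lemma dyck_count_U {w : Fin (2 * k) → MSym} (hw : w ∈ DyckF k) : symCount w U = k := by
  simp only [DyckF, Finset.mem_filter, Finset.mem_univ, true_and] at hw
  obtain ⟨hM, hUD⟩ := hw
  have h1 := symCount_total w
  have h2 := hM.2
  have h3 : symCount w H = 0 := symCount_eq_zero (fun i => by rcases hUD i with h | h <;> simp [h])
  have h4 : symCount w I = 0 := symCount_eq_zero (fun i => by rcases hUD i with h | h <;> simp [h])
  omega

section transport2

variable {T : Finset (Fin m)} (hTc : Tᶜ.card = 2 * k)

def phiW (hTc : Tᶜ.card = 2 * k) (σ : Fin m → MSym) : Fin (2 * k) → MSym :=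
  fun l => σ ((Tᶜ.orderIsoOfFin hTc l : Fin m))

def psiW (hTc : Tᶜ.card = 2 * k) (w : Fin (2 * k) → MSym) : Fin m → MSym :=
  fun i => if hi : i ∈ Tᶜ then w ((Tᶜ.orderIsoOfFin hTc).symm ⟨i, hi⟩) else H

lemma compat_phi {σ : Fin m → MSym} (hσT : Hset σ = T) : Compat hTc σ (phiW hTc σ) := by
  constructor
  · intro i hi
    rw [← hσT] at hi
    simpa [Hset] using hi
  · intro l; rfl

lemma compat_psi (w : Fin (2 * k) → MSym) : Compat hTc (psiW hTc w) w := by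
  constructor
  · intro i hi
    have : ¬ i ∈ Tᶜ := by simpa [Finset.mem_compl] using hi
    simp [psiW, this]
  · intro l
    have hl : ((Tᶜ.orderIsoOfFin hTc l : Fin m)) ∈ Tᶜ := (Tᶜ.orderIsoOfFin hTc l).2
    show (if hi : ((Tᶜ.orderIsoOfFin hTc l : Fin m)) ∈ Tᶜ then
        w ((Tᶜ.orderIsoOfFin hTc).symm ⟨_, hi⟩) else H) = w l
    rw [dif_pos hl]
    congr 1
    rw [Subtype.coe_eta]
    exact (Tᶜ.orderIsoOfFin hTc).symm_apply_apply l

lemma fiber_card {T : Finset (Fin m)} (h2k : 2 * k ≤ m) (hT : T.card = m - 2 * k) :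
    ((Shapes m k).filter (fun σ => Hset σ = T)).card = (DyckF k).card := by
  have hTc : Tᶜ.card = 2 * k := by
    rw [Finset.card_compl, Fintype.card_fin, hT]
    omega
  apply Finset.card_bij' (fun σ _ => phiW hTc σ) (fun w _ => psiW hTc w)
  · -- phi maps into DyckF
    intro σ hσ
    simp only [Finset.mem_filter] at hσ
    obtain ⟨hσS, hσT⟩ := hσ
    have hc := compat_phi hTc hσT
    simp only [Shapes, Finset.mem_filter, Finset.mem_univ, true_and] at hσS
    simp only [DyckF, Finset.mem_filter, Finset.mem_univ, true_and]
    constructor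
    · exact (compat_motzkin hTc hc).1 hσS.1
    · intro l
      have hl : ((Tᶜ.orderIsoOfFin hTc l : Fin m)) ∈ Tᶜ := (Tᶜ.orderIsoOfFin hTc l).2
      have hnT : ((Tᶜ.orderIsoOfFin hTc l : Fin m)) ∉ T := Finset.mem_compl.1 hl
      have hnH : σ ((Tᶜ.orderIsoOfFin hTc l : Fin m)) ≠ H := by
        intro h
        have hmem : ((Tᶜ.orderIsoOfFin hTc l : Fin m)) ∈ Hset σ := by
          simpa [Hset] using h
        rw [hσT] at hmem
        exact hnT hmem
      have hnI := hσS.2.2 ((Tᶜ.orderIsoOfFin hTc l : Fin m))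
      unfold phiW
      cases h : σ ((Tᶜ.orderIsoOfFin hTc l : Fin m)) <;> simp_all
  · -- psi maps into the fiber
    intro w hw
    have hc := compat_psi hTc w
    have hwU := dyck_count_U hw
    simp only [DyckF, Finset.mem_filter, Finset.mem_univ, true_and] at hw
    obtain ⟨hwM, hwUD⟩ := hw
    have hHset : Hset (psiW hTc w) = T := by
      ext i
      simp only [Hset, Finset.mem_filter, Finset.mem_univ, true_and]
      by_cases hi : i ∈ Tᶜ
      · have hiT : i ∉ T := Finset.mem_compl.1 hi
        have : psiW hTc w i = w ((Tᶜ.orderIsoOfFin hTc).symm ⟨i, hi⟩) := by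
          simp [psiW, hi]
        rw [this]
        rcases hwUD ((Tᶜ.orderIsoOfFin hTc).symm ⟨i, hi⟩) with h | h <;>
          simp [h, hiT]
      · have hiT : i ∈ T := by simpa [Finset.mem_compl] using hi
        simp [psiW, hi, hiT]
    simp only [Finset.mem_filter, Shapes, Finset.mem_univ, true_and]
    refine ⟨⟨?_, ?_, ?_⟩, hHset⟩
    · exact (compat_motzkin hTc hc).2 hwM
    · rw [compat_count hTc hc (by simp)]
      exact hwU
    · intro i
      unfold psiW
      by_cases hi : i ∈ Tᶜ
      · rw [dif_pos hi]
        rcases hwUD ((Tᶜ.orderIsoOfFin hTc).symm ⟨i, hi⟩) with h | h <;> simp [h]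
      · rw [dif_neg hi]; simp
  · -- left inverse
    intro σ hσ
    simp only [Finset.mem_filter] at hσ
    funext i
    by_cases hi : i ∈ Tᶜ
    · simp [psiW, phiW, hi]
    · have hiT : i ∈ T := by simpa [Finset.mem_compl] using hi
      have : σ i = H := by
        have := hσ.2 ▸ hiT
        simpa [Hset] using this
      simp [psiW, hi, this]
  · -- right inverse
    intro w hw
    funext l
    exact (compat_psi hTc w).2 l

end transport2

end MBW
namespace MBW
open MSym

variable {m k : ℕ}

/-- the first two elements of `T` are adjacent -/
def AdjP (T : Finset (Fin m)) : Prop :=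
  ∃ p : Fin m × Fin m, (p.2 : ℕ) = (p.1 : ℕ) + 1 ∧ p.1 ∈ T ∧ p.2 ∈ T ∧
    ∀ i ∈ T, i = p.1 ∨ p.2 ≤ i

instance : DecidablePred (AdjP (m := m)) := fun _ => by
  unfold AdjP; infer_instance

lemma adjP_min {T : Finset (Fin m)} {p : Fin m × Fin m}
    (hp2 : (p.2 : ℕ) = (p.1 : ℕ) + 1) (hp1 : p.1 ∈ T)
    (hall : ∀ i ∈ T, i = p.1 ∨ p.2 ≤ i) (hne : T.Nonempty) : T.min' hne = p.1 := by
  apply le_antisymm (Finset.min'_le T p.1 hp1)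
  apply Finset.le_min'
  intro i hi
  rcases hall i hi with h | h
  · exact h ▸ le_refl _
  · have h' : (p.2 : ℕ) ≤ (i : ℕ) := h
    have : (p.1 : ℕ) ≤ (i : ℕ) := by omega
    exact this

lemma adj_subset_count (hm : 1 ≤ m) {h : ℕ} (hh : 2 ≤ h) (hhm : h ≤ m) :
    ((Finset.powersetCard h (Finset.univ : Finset (Fin m))).filter AdjP).card
      = (m - 1).choose (h - 1) := by
  haveI : NeZero m := ⟨by omega⟩
  have key : ((Finset.powersetCard h (Finset.univ : Finset (Fin m))).filter AdjP).card
      = (Finset.powersetCard (h - 1) ((Finset.univ : Finset (Fin m)).erase 0)).card := by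
    have hTne : ∀ T ∈ (Finset.powersetCard h (Finset.univ : Finset (Fin m))).filter AdjP,
        T.Nonempty := by
      intro T hT
      simp only [Finset.mem_filter, Finset.mem_powersetCard_univ] at hT
      rw [← Finset.card_pos, hT.1]
      omega
    have hSne : ∀ S ∈ Finset.powersetCard (h - 1) ((Finset.univ : Finset (Fin m)).erase 0),
        S.Nonempty := by
      intro S hS
      simp only [Finset.mem_powersetCard] at hS
      rw [← Finset.card_pos, hS.2]
      omega
    have hSpred : ∀ (S : Finset (Fin m)) (hS : S.Nonempty), S ⊆ Finset.univ.erase 0 →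
        ((S.min' hS : ℕ) - 1) < m := by
      intro S hS _
      have := (S.min' hS).2
      omega
    refine Finset.card_bij' (fun T hT => T.erase (T.min' (hTne T hT)))
      (fun S hS => insert (⟨((S.min' (hSne S hS) : ℕ)) - 1,
        by have := (S.min' (hSne S hS)).2; omega⟩ : Fin m) S) ?_ ?_ ?_ ?_
    · -- forward maps-to
      intro T hT
      have hne := hTne T hT
      simp only [Finset.mem_filter, Finset.mem_powersetCard_univ] at hT
      obtain ⟨hcard, p, hp2, hp1, hp2m, hall⟩ := hT
      have hmin : ∀ hne', T.min' hne' = p.1 := fun _ => adjP_min hp2 hp1 hall _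
      rw [Finset.mem_powersetCard]
      constructor
      · intro i hi
        simp only [Finset.mem_erase, hmin] at hi
        rw [Finset.mem_erase]
        refine ⟨?_, Finset.mem_univ i⟩
        rcases hall i hi.2 with he | he
        · exact absurd he hi.1
        · have h1 : (p.2 : ℕ) ≤ (i : ℕ) := he
          intro h0
          rw [h0] at h1
          simp only [Fin.val_zero] at h1
          omega
      · rw [Finset.card_erase_of_mem (Finset.min'_mem T _), hcard]
    · -- backward maps-to
      intro S hS
      have hne := hSne S hS
      simp only [Finset.mem_powersetCard] at hS
      obtain ⟨hsub, hcard⟩ := hS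
      have hq0 : (S.min' hne : ℕ) ≠ 0 := by
        have hh0 := hsub (Finset.min'_mem S hne)
        rw [Finset.mem_erase] at hh0
        intro h0
        exact hh0.1 (Fin.ext h0)
      have hq'S : ∀ (pf : ((S.min' hne : ℕ) - 1) < m),
          (⟨(S.min' hne : ℕ) - 1, pf⟩ : Fin m) ∉ S := by
        intro pf hmem
        have h1 := Finset.min'_le S _ hmem
        have h2 : (S.min' hne : ℕ) ≤ (S.min' hne : ℕ) - 1 := h1
        omega
      simp only [Finset.mem_filter, Finset.mem_powersetCard_univ]
      constructor
      · rw [Finset.card_insert_of_notMem (hq'S _), hcard]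
        omega
      · refine ⟨(⟨(S.min' hne : ℕ) - 1, by have := (S.min' hne).2; omega⟩, S.min' hne),
          by simp; omega, Finset.mem_insert_self _ _,
          Finset.mem_insert_of_mem (Finset.min'_mem S hne), ?_⟩
        intro i hi
        rcases Finset.mem_insert.1 hi with he | he
        · exact Or.inl he
        · exact Or.inr (Finset.min'_le S i he)
    · -- left inverse
      intro T hT
      have hne := hTne T hT
      simp only [Finset.mem_filter, Finset.mem_powersetCard_univ] at hT
      obtain ⟨hcard, p, hp2, hp1, hp2m, hall⟩ := hT
      have hmin : ∀ hne', T.min' hne' = p.1 := fun _ => adjP_min hp2 hp1 hall _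
      have hminS : ∀ (hS' : (T.erase p.1).Nonempty), (T.erase p.1).min' hS' = p.2 := by
        intro hS'
        apply le_antisymm
        · apply Finset.min'_le
          simp only [Finset.mem_erase]
          refine ⟨?_, hp2m⟩
          intro hh0
          have : (p.2 : ℕ) = (p.1 : ℕ) := by rw [hh0]
          omega
        · apply Finset.le_min'
          intro i hi
          simp only [Finset.mem_erase] at hi
          rcases hall i hi.2 with he | he
          · exact absurd he hi.1
          · exact he
      simp only [hmin, hminS]
      have hval : (⟨(p.2 : ℕ) - 1, by have := p.2.2; omega⟩ : Fin m) = p.1 := by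
        apply Fin.ext
        simp only [hp2]
        omega
      convert Finset.insert_erase hp1 using 2
    · -- right inverse
      intro S hS
      have hne := hSne S hS
      simp only [Finset.mem_powersetCard] at hS
      obtain ⟨hsub, hcard⟩ := hS
      have hq0 : (S.min' hne : ℕ) ≠ 0 := by
        have hh0 := hsub (Finset.min'_mem S hne)
        rw [Finset.mem_erase] at hh0
        intro h0
        exact hh0.1 (Fin.ext h0)
      have hq'S : ∀ (pf : ((S.min' hne : ℕ) - 1) < m),
          (⟨(S.min' hne : ℕ) - 1, pf⟩ : Fin m) ∉ S := by
        intro pf hmem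
        have h1 := Finset.min'_le S _ hmem
        have h2 : (S.min' hne : ℕ) ≤ (S.min' hne : ℕ) - 1 := h1
        omega
      have hmin2 : ∀ pf (hne2 : (insert (⟨(S.min' hne : ℕ) - 1, pf⟩ : Fin m) S).Nonempty),
          (insert (⟨(S.min' hne : ℕ) - 1, pf⟩ : Fin m) S).min' hne2
            = (⟨(S.min' hne : ℕ) - 1, pf⟩ : Fin m) := by
        intro pf hne2
        apply le_antisymm
        · exact Finset.min'_le _ _ (Finset.mem_insert_self _ _)
        · apply Finset.le_min'
          intro i hi
          rcases Finset.mem_insert.1 hi with he | he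
          · exact he ▸ le_refl _
          · have h1 : S.min' hne ≤ i := Finset.min'_le S i he
            have h2 : ((⟨(S.min' hne : ℕ) - 1, pf⟩ : Fin m) : ℕ) ≤ (S.min' hne : ℕ) :=
              Nat.sub_le _ _
            exact le_trans h2 h1
      simp only [hmin2]
      exact Finset.erase_insert (hq'S _)
  rw [key, Finset.card_powersetCard, Finset.card_erase_of_mem (Finset.mem_univ 0),
    Finset.card_univ, Fintype.card_fin]

end MBW
namespace MBW
open MSym

variable {m k : ℕ}

lemma card_Hset {σ : Fin m → MSym} (hσ : σ ∈ Shapes m k) : (Hset σ).card = m - 2 * k :=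
  shapes_H hσ

lemma firstHI_adjP {σ : Fin m → MSym} (hσ : σ ∈ Shapes m k) :
    firstHIPairHH σ ↔ AdjP (Hset σ) := by
  simp only [Shapes, Finset.mem_filter, Finset.mem_univ, true_and] at hσ
  obtain ⟨-, -, hI⟩ := hσ
  have hmem : ∀ i, i ∈ Hset σ ↔ (σ i = H ∨ σ i = I) := by
    intro i
    simp only [Hset, Finset.mem_filter, Finset.mem_univ, true_and]
    constructor
    · exact Or.inl
    · rintro (h | h)
      · exact h
      · exact absurd h (hI i)
  constructor
  · rintro ⟨p, hp2, h1, h2, hall⟩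
    exact ⟨p, hp2, (hmem p.1).2 (Or.inl h1), (hmem p.2).2 (Or.inl h2),
      fun i hi => hall i ((hmem i).1 hi)⟩
  · rintro ⟨p, hp2, h1, h2, hall⟩
    refine ⟨p, hp2, ?_, ?_, fun i hi => hall i ((hmem i).2 hi)⟩
    · rcases (hmem p.1).1 h1 with h | h
      · exact h
      · exact absurd h (hI p.1)
    · rcases (hmem p.2).1 h2 with h | h
      · exact h
      · exact absurd h (hI p.2)

lemma count_shapes (h2 : 2 * k + 2 ≤ m) :
    m * ((Shapes m k).filter (fun σ => firstHIPairHH σ)).card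
      = (m - 2 * k) * (Shapes m k).card := by
  set h := m - 2 * k with hh
  have h2k : 2 * k ≤ m := by omega
  have hh2 : 2 ≤ h := by omega
  have hhm : h ≤ m := by omega
  have hmaps : ∀ σ ∈ Shapes m k,
      Hset σ ∈ Finset.powersetCard h (Finset.univ : Finset (Fin m)) := by
    intro σ hσ
    rw [Finset.mem_powersetCard_univ]
    exact card_Hset hσ
  -- N = choose m h * D
  have hN : (Shapes m k).card
      = m.choose h * (DyckF k).card := by
    rw [Finset.card_eq_sum_ones,
      ← Finset.sum_fiberwise_of_maps_to hmaps (fun _ => (1 : ℕ))]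
    have : ∀ T ∈ Finset.powersetCard h (Finset.univ : Finset (Fin m)),
        ∑ σ ∈ (Shapes m k).filter (fun σ => Hset σ = T), (1 : ℕ)
          = (DyckF k).card := by
      intro T hT
      rw [← Finset.card_eq_sum_ones]
      exact fiber_card h2k (Finset.mem_powersetCard_univ.1 hT)
    rw [Finset.sum_congr rfl this, Finset.sum_const, smul_eq_mul,
      Finset.card_powersetCard, Finset.card_univ, Fintype.card_fin]
  -- M = A * D
  have hM : ((Shapes m k).filter (fun σ => firstHIPairHH σ)).card
      = ((Finset.powersetCard h (Finset.univ : Finset (Fin m))).filter AdjP).card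
          * (DyckF k).card := by
    rw [Finset.card_eq_sum_ones,
      ← Finset.sum_fiberwise_of_maps_to
        (fun σ hσ => hmaps σ (Finset.mem_of_mem_filter σ hσ)) (fun _ => (1 : ℕ))]
    have : ∀ T ∈ Finset.powersetCard h (Finset.univ : Finset (Fin m)),
        ∑ σ ∈ ((Shapes m k).filter (fun σ => firstHIPairHH σ)).filter
            (fun σ => Hset σ = T), (1 : ℕ)
          = if AdjP T then (DyckF k).card else 0 := by
      intro T hT
      rw [← Finset.card_eq_sum_ones]
      have hcomm : ((Shapes m k).filter (fun σ => firstHIPairHH σ)).filter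
            (fun σ => Hset σ = T)
          = ((Shapes m k).filter (fun σ => Hset σ = T)).filter
            (fun σ => firstHIPairHH σ) := Finset.filter_comm _ _ _
      rw [hcomm]
      by_cases hA : AdjP T
      · rw [if_pos hA, Finset.filter_true_of_mem, fiber_card h2k
          (Finset.mem_powersetCard_univ.1 hT)]
        intro σ hσ
        simp only [Finset.mem_filter] at hσ
        rw [firstHI_adjP hσ.1, hσ.2]
        exact hA
      · rw [if_neg hA, Finset.filter_false_of_mem, Finset.card_empty]
        intro σ hσ
        simp only [Finset.mem_filter] at hσ
        rw [firstHI_adjP hσ.1, hσ.2]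
        exact hA
    rw [Finset.sum_congr rfl this, Finset.sum_ite, Finset.sum_const, Finset.sum_const,
      smul_zero, add_zero, smul_eq_mul]
  rw [hN, hM, adj_subset_count (by omega) hh2 hhm]
  obtain ⟨m', rfl⟩ : ∃ m', m = m' + 1 := ⟨m - 1, by omega⟩
  obtain ⟨h', hh'⟩ : ∃ h', h = h' + 1 := ⟨h - 1, by omega⟩
  rw [hh']
  simp only [Nat.add_sub_cancel]
  have := Nat.add_one_mul_choose_eq m' h'
  rw [← mul_assoc, ← mul_assoc, this]
  ring

end MBW

/-- For all real `α, β`, all `m ≥ 2` and all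
`0 ≤ k ≤ ⌊m/2⌋ - 1`, with `B_k ⊆ S_k` the set of paths in which a pair of
adjacent `H` symbols occurs before all other `H` or `I` symbols,
`Σ_{x ∈ B_k} e^{-E(x)} = ((m-2k)/m)·(e^{-α}/(e^{-α}+e^{-β}))²·Σ_{x ∈ S_k} e^{-E(x)}`. -/
theorem motzkin_Bk_weight (α β : ℝ) (m k : ℕ) (hm : 2 ≤ m) (hk : k + 1 ≤ m / 2) :
    ∑ x ∈ (Sset m k).filter (fun x => firstHIPairHH x.1),
        Real.exp (-(energy α β x.1)) =
      (((m : ℝ) - 2 * (k : ℝ)) / (m : ℝ)) *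
        (Real.exp (-α) / (Real.exp (-α) + Real.exp (-β))) ^ 2 *
        ∑ x ∈ Sset m k, Real.exp (-(energy α β x.1)) := by
  classical
  have h2 : 2 * k + 2 ≤ m := by omega
  have h2k : 2 * k ≤ m := by omega
  rw [MBW.sum_Sset α β m k firstHIPairHH, MBW.sum_Sset' α β m k]
  have hE : ∀ s : Finset (Fin m → MSym),
      ∑ x ∈ s, Real.exp (-(energy α β x))
        = Real.exp (-α) * ∑ x ∈ s, ∏ i, MBW.gW α β (x i) := by
    intro s
    rw [Finset.mul_sum]
    exact Finset.sum_congr rfl (fun x _ => MBW.exp_energy α β x)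
  rw [hE, hE]
  have hapos : (0 : ℝ) < Real.exp (-α) := Real.exp_pos _
  have hbpos : (0 : ℝ) < Real.exp (-β) := Real.exp_pos _
  have hsspos : (0 : ℝ) < Real.exp (-α) + Real.exp (-β) := by linarith
  have hmpos : (0 : ℝ) < (m : ℝ) := by positivity
  have hB := MBW.sum_SkFB_eq (m := m) (k := k) α β
  have hS := MBW.sum_SkF_eq (m := m) (k := k) α β
  have hC := MBW.count_shapes (m := m) (k := k) h2
  set aa := Real.exp (-α) with haa
  set bb := Real.exp (-β) with hbb
  set ss := aa + bb with hss
  set N := ((MBW.Shapes m k).card : ℝ) with hN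
  set M := (((MBW.Shapes m k).filter (fun σ => firstHIPairHH σ)).card : ℝ) with hM
  have hMN : (m : ℝ) * M = ((m : ℝ) - 2 * (k : ℝ)) * N := by
    have hcast : ((m - 2 * k : ℕ) : ℝ) = (m : ℝ) - 2 * (k : ℝ) := by
      push_cast [Nat.cast_sub h2k]
      ring
    rw [hM, hN, ← hcast, ← Nat.cast_mul, ← Nat.cast_mul, hC]
  have hkey : (∑ x ∈ (MBW.SkF m k).filter (fun x => firstHIPairHH x),
      ∏ i, MBW.gW α β (x i))
      = M * (ss ^ (m - 2 * k) * aa ^ k * aa ^ 2) / ss ^ 2 := by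
    rw [eq_div_iff (by positivity)]
    exact hB
  rw [hkey, hS]
  have hM' : M = ((m : ℝ) - 2 * (k : ℝ)) * N / (m : ℝ) := by
    rw [eq_div_iff hmpos.ne']; linarith [hMN]
  rw [hM']
  ring
end

section
/- For all real α and β and every m ≥ 2, the sequence p(k) = binom(m, 2k)·C_k·e^{−αk}·(e^{−α} + e^{−β})^{m−2k}, defined for 0 ≤ k ≤ ⌊m/2⌋, is log-concave in k: p(k)² ≥ p(k−1)·p(k+1) for all 1 ≤ k ≤ ⌊m/2⌋ − 1. -/
open Finset

private lemma cat_div (k : ℕ) : (2 * k).choose k / (k + 1) = catalan k := by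
  rw [catalan_eq_centralBinom_div]; rfl

private lemma cat_succ (n : ℕ) :
    (n + 2) * catalan (n + 1) = 2 * (2 * n + 1) * catalan n := by
  apply Nat.eq_of_mul_eq_mul_left (Nat.succ_pos n)
  calc (n + 1) * ((n + 2) * catalan (n + 1))
      = (n + 1 + 1) * catalan (n + 1) * (n + 1) := by ring
    _ = Nat.centralBinom (n + 1) * (n + 1) := by rw [succ_mul_catalan_eq_centralBinom]
    _ = (n + 1) * Nat.centralBinom (n + 1) := mul_comm _ _
    _ = 2 * (2 * n + 1) * Nat.centralBinom n := Nat.succ_mul_centralBinom_succ n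
    _ = 2 * (2 * n + 1) * ((n + 1) * catalan n) := by rw [succ_mul_catalan_eq_centralBinom]
    _ = (n + 1) * (2 * (2 * n + 1) * catalan n) := by ring

private lemma keyNat (m k : ℕ) (hk : 1 ≤ k) (hm : 2 * k + 2 ≤ m) :
    m.choose (2 * (k - 1)) * catalan (k - 1) *
      (m.choose (2 * (k + 1)) * catalan (k + 1)) ≤
    (m.choose (2 * k) * catalan k) ^ 2 := by
  obtain ⟨s, rfl⟩ : ∃ s, k = s + 1 := ⟨k - 1, by omega⟩
  obtain ⟨t, rfl⟩ : ∃ t, m = 2 * s + 4 + t := ⟨m - (2 * s + 4), by omega⟩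
  simp only [Nat.add_sub_cancel]
  rw [show 2 * (s + 1 + 1) = 2 * s + 4 by omega, show 2 * (s + 1) = 2 * s + 2 by omega,
    show s + 1 + 1 = s + 2 by omega]
  -- choose identities over ℤ
  have c1 : ((2 * s + 4 + t).choose (2 * s + 1) : ℤ) * (2 * s + 1)
      = ((2 * s + 4 + t).choose (2 * s) : ℤ) * (t + 4) := by
    have := Nat.choose_succ_right_eq (2 * s + 4 + t) (2 * s)
    rw [show 2 * s + 4 + t - 2 * s = t + 4 by omega] at this
    exact_mod_cast this
  have c2 : ((2 * s + 4 + t).choose (2 * s + 2) : ℤ) * (2 * s + 2)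
      = ((2 * s + 4 + t).choose (2 * s + 1) : ℤ) * (t + 3) := by
    have := Nat.choose_succ_right_eq (2 * s + 4 + t) (2 * s + 1)
    rw [show 2 * s + 4 + t - (2 * s + 1) = t + 3 by omega,
      show 2 * s + 1 + 1 = 2 * s + 2 by omega] at this
    exact_mod_cast this
  have c3 : ((2 * s + 4 + t).choose (2 * s + 3) : ℤ) * (2 * s + 3)
      = ((2 * s + 4 + t).choose (2 * s + 2) : ℤ) * (t + 2) := by
    have := Nat.choose_succ_right_eq (2 * s + 4 + t) (2 * s + 2)
    rw [show 2 * s + 4 + t - (2 * s + 2) = t + 2 by omega,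
      show 2 * s + 2 + 1 = 2 * s + 3 by omega] at this
    exact_mod_cast this
  have c4 : ((2 * s + 4 + t).choose (2 * s + 4) : ℤ) * (2 * s + 4)
      = ((2 * s + 4 + t).choose (2 * s + 3) : ℤ) * (t + 1) := by
    have := Nat.choose_succ_right_eq (2 * s + 4 + t) (2 * s + 3)
    rw [show 2 * s + 4 + t - (2 * s + 3) = t + 1 by omega,
      show 2 * s + 3 + 1 = 2 * s + 4 by omega] at this
    exact_mod_cast this
  -- catalan identities over ℤ
  have k3 : ((catalan (s + 1) : ℤ)) * (s + 2) = (catalan s : ℤ) * (2 * (2 * s + 1)) := by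
    have h := cat_succ s
    zify at h
    linear_combination h
  have k4 : ((catalan (s + 2) : ℤ)) * (s + 3)
      = (catalan (s + 1) : ℤ) * (2 * (2 * s + 3)) := by
    have h := cat_succ (s + 1)
    rw [show s + 1 + 2 = s + 3 by omega, show s + 1 + 1 = s + 2 by omega] at h
    zify at h
    linear_combination h
  zify
  set a : ℤ := ((2 * s + 4 + t).choose (2 * s) : ℤ) with hax
  set x : ℤ := ((2 * s + 4 + t).choose (2 * s + 1) : ℤ)
  set b : ℤ := ((2 * s + 4 + t).choose (2 * s + 2) : ℤ)
  set y : ℤ := ((2 * s + 4 + t).choose (2 * s + 3) : ℤ)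
  set c : ℤ := ((2 * s + 4 + t).choose (2 * s + 4) : ℤ)
  set u : ℤ := (catalan s : ℤ)
  set v : ℤ := (catalan (s + 1) : ℤ)
  set w : ℤ := (catalan (s + 2) : ℤ)
  have h1 : a * (((t : ℤ) + 4) * ((t : ℤ) + 3))
      = b * ((2 * (s : ℤ) + 2) * (2 * (s : ℤ) + 1)) := by
    linear_combination (-((t : ℤ) + 3)) * c1 + (-(2 * (s : ℤ) + 1)) * c2
  have h2 : c * ((2 * (s : ℤ) + 3) * (2 * (s : ℤ) + 4))
      = b * (((t : ℤ) + 2) * ((t : ℤ) + 1)) := by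
    linear_combination (2 * (s : ℤ) + 3) * c4 + ((t : ℤ) + 1) * c3
  have h3 : u * (2 * (2 * (s : ℤ) + 1)) = v * ((s : ℤ) + 2) := k3.symm
  have h4 : w * ((s : ℤ) + 3) = v * (2 * (2 * (s : ℤ) + 3)) := k4
  set d1 : ℤ := ((t : ℤ) + 4) * ((t : ℤ) + 3) with hd1
  set n1 : ℤ := (2 * (s : ℤ) + 2) * (2 * (s : ℤ) + 1) with hn1
  set d2 : ℤ := (2 * (s : ℤ) + 3) * (2 * (s : ℤ) + 4) with hd2
  set n2 : ℤ := ((t : ℤ) + 2) * ((t : ℤ) + 1) with hn2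
  set e3 : ℤ := 2 * (2 * (s : ℤ) + 1) with he3
  set f3 : ℤ := (s : ℤ) + 2 with hf3
  set e4 : ℤ := (s : ℤ) + 3 with he4
  set f4 : ℤ := 2 * (2 * (s : ℤ) + 3) with hf4
  have key : (a * u * (c * w)) * (d1 * d2 * e3 * e4)
      = (b * v) ^ 2 * (n1 * n2 * f3 * f4) := by
    linear_combination (c * d2 * (u * e3) * (w * e4)) * h1
      + (b * n1 * (u * e3) * (w * e4)) * h2
      + (b * n1 * (b * n2) * (w * e4)) * h3
      + (b * n1 * (b * n2) * (v * f3)) * h4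
  have hs : (0 : ℤ) ≤ (s : ℤ) := Int.natCast_nonneg s
  have ht : (0 : ℤ) ≤ (t : ℤ) := Int.natCast_nonneg t
  have hineq : n1 * n2 * f3 * f4 ≤ d1 * d2 * e3 * e4 := by
    have hst : ((s : ℤ) + 1) * (((t : ℤ) + 2) * ((t : ℤ) + 1))
        ≤ ((s : ℤ) + 3) * (((t : ℤ) + 4) * ((t : ℤ) + 3)) := by nlinarith
    have hpos : (0 : ℤ) ≤ 2 * (2 * (s : ℤ) + 1) * (2 * (s : ℤ) + 3) * (2 * ((s : ℤ) + 2)) := by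
      positivity
    calc n1 * n2 * f3 * f4
        = (2 * (2 * (s : ℤ) + 1) * (2 * (s : ℤ) + 3) * (2 * ((s : ℤ) + 2))) *
            (((s : ℤ) + 1) * (((t : ℤ) + 2) * ((t : ℤ) + 1))) := by
          rw [hn1, hn2, hf3, hf4]; ring
      _ ≤ (2 * (2 * (s : ℤ) + 1) * (2 * (s : ℤ) + 3) * (2 * ((s : ℤ) + 2))) *
            (((s : ℤ) + 3) * (((t : ℤ) + 4) * ((t : ℤ) + 3))) :=
          mul_le_mul_of_nonneg_left hst hpos
      _ = d1 * d2 * e3 * e4 := by rw [hd1, hd2, he3, he4]; ring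
  have hP : (0 : ℤ) < d1 * d2 * e3 * e4 := by
    rw [hd1, hd2, he3, he4]; positivity
  have hfin : (a * u * (c * w)) * (d1 * d2 * e3 * e4)
      ≤ (b * v) ^ 2 * (d1 * d2 * e3 * e4) := by
    rw [key]; exact mul_le_mul_of_nonneg_left hineq (sq_nonneg _)
  exact le_of_mul_le_mul_right hfin hP

/-- `p(k) = binom(m, 2k)·C_k·e^{-αk}·(e^{-α}+e^{-β})^{m-2k}`, where
`C_k = (1/(k+1))·binom(2k,k)` is the `k`-th Catalan number; up to a constant
factor this is the stationary weight `π̄(k) = π(S_k)` of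
`S_k = {x ∈ 𝔐²_m : |x|_U = k}` under the Gibbs distribution. -/
noncomputable def pSeq (α β : ℝ) (m k : ℕ) : ℝ :=
  (m.choose (2 * k) : ℝ) * (((2 * k).choose k / (k + 1) : ℕ) : ℝ) *
    Real.exp (-α * (k : ℝ)) * (Real.exp (-α) + Real.exp (-β)) ^ (m - 2 * k)

/-- For all real `α, β` and every `m ≥ 2`, the sequence
`p(k)`, `0 ≤ k ≤ ⌊m/2⌋`, is log-concave: `p(k)² ≥ p(k-1)·p(k+1)` for all
`1 ≤ k ≤ ⌊m/2⌋ - 1`. -/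
theorem pSeq_log_concave (α β : ℝ) (m : ℕ) (hm : 2 ≤ m) :
    ∀ k : ℕ, 1 ≤ k → k + 1 ≤ m / 2 →
      pSeq α β m (k - 1) * pSeq α β m (k + 1) ≤ (pSeq α β m k) ^ 2 := by
  intro k hk hk2
  have h2m : 2 * k + 2 ≤ m := by omega
  obtain ⟨r, hr⟩ : ∃ r, m = 2 * k + 2 + r := ⟨m - (2 * k + 2), by omega⟩
  have e0 : m - 2 * (k + 1) = r := by omega
  have e1 : m - 2 * k = r + 2 := by omega
  have e2 : m - 2 * (k - 1) = r + 4 := by omega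
  unfold pSeq
  simp only [cat_div, e0, e1, e2]
  set cc : ℝ := Real.exp (-α) + Real.exp (-β) with hcc
  have hccpos : 0 < cc := by positivity
  have hek : Real.exp (-α * ((k - 1 : ℕ) : ℝ)) * Real.exp (-α * ((k + 1 : ℕ) : ℝ))
      = Real.exp (-α * (k : ℝ)) ^ 2 := by
    rw [sq, ← Real.exp_add, ← Real.exp_add]
    congr 1
    have hc1 : ((k - 1 : ℕ) : ℝ) = (k : ℝ) - 1 := by
      have h1 : (1 : ℕ) ≤ k := hk
      push_cast [h1]; ring
    rw [hc1]; push_cast; ring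
  have hpc : cc ^ (r + 4) * cc ^ r = (cc ^ (r + 2)) ^ 2 := by ring
  have hNR : ((m.choose (2 * (k - 1)) * catalan (k - 1) *
      (m.choose (2 * (k + 1)) * catalan (k + 1)) : ℕ) : ℝ)
      ≤ ((m.choose (2 * k) * catalan k : ℕ) : ℝ) ^ 2 := by
    exact_mod_cast keyNat m k hk h2m
  push_cast at hNR
  calc (m.choose (2 * (k - 1)) : ℝ) * (catalan (k - 1) : ℝ) *
        Real.exp (-α * ((k - 1 : ℕ) : ℝ)) * cc ^ (r + 4) *
        ((m.choose (2 * (k + 1)) : ℝ) * (catalan (k + 1) : ℝ) *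
          Real.exp (-α * ((k + 1 : ℕ) : ℝ)) * cc ^ r)
      = ((m.choose (2 * (k - 1)) : ℝ) * (catalan (k - 1) : ℝ) *
          ((m.choose (2 * (k + 1)) : ℝ) * (catalan (k + 1) : ℝ))) *
        ((Real.exp (-α * ((k - 1 : ℕ) : ℝ)) * Real.exp (-α * ((k + 1 : ℕ) : ℝ))) *
          (cc ^ (r + 4) * cc ^ r)) := by ring
    _ = ((m.choose (2 * (k - 1)) : ℝ) * (catalan (k - 1) : ℝ) *
          ((m.choose (2 * (k + 1)) : ℝ) * (catalan (k + 1) : ℝ))) *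
        (Real.exp (-α * (k : ℝ)) ^ 2 * (cc ^ (r + 2)) ^ 2) := by rw [hek, hpc]
    _ ≤ ((m.choose (2 * k) : ℝ) * (catalan k : ℝ)) ^ 2 *
        (Real.exp (-α * (k : ℝ)) ^ 2 * (cc ^ (r + 2)) ^ 2) :=
        mul_le_mul_of_nonneg_right hNR (by positivity)
    _ = ((m.choose (2 * k) : ℝ) * (catalan k : ℝ) * Real.exp (-α * (k : ℝ)) *
          cc ^ (r + 2)) ^ 2 := by ring
end
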